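/- arXiv:2005.01660 — 7 statements merged into one kernel-verified Lean document; each statement's English description precedes it below -/
import Mathlib

section
/- For every sequence of nonnegative real numbers (a_n) in ℓ^p with 1 < p < ∞, the inequality ∑_{n=1}^∞ ((1/n) ∑_{k=1}^n a_k)^p ≤ (p/(p-1))^p ∑_{n=1}^∞ a_n^p holds (Hardy's inequality). -/
open scoped BigOperators

/-- Hardy's inequality: for a sequence of nonnegative reals `a` (indexed from 0,
corresponding to `a_{n+1}` in the classical statement) with `∑ a_n^p < ∞` and `1 < p`,
we have `∑_n ((1/(n+1)) ∑_{k=0}^n a_k)^p ≤ (p/(p-1))^p ∑_n a_n^p`. -/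
theorem hardy_inequality (p : ℝ) (hp : 1 < p) (a : ℕ → ℝ)
    (ha : ∀ n, 0 ≤ a n) (hsum : Summable (fun n => a n ^ p)) :
    Summable (fun n : ℕ => ((1 / ((n : ℝ) + 1)) * ∑ k ∈ Finset.range (n + 1), a k) ^ p) ∧
    ∑' n : ℕ, ((1 / ((n : ℝ) + 1)) * ∑ k ∈ Finset.range (n + 1), a k) ^ p ≤
      (p / (p - 1)) ^ p * ∑' n : ℕ, a n ^ p := by
  have hp0 : (0:ℝ) < p := lt_trans one_pos hp
  have hp1 : (0:ℝ) < p - 1 := sub_pos.2 hp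
  set q : ℝ := p / (p - 1) with hq
  have hpq : p.HolderConjugate q := Real.HolderConjugate.conjExponent hp
  set A : ℕ → ℝ := fun n => (1 / ((n : ℝ) + 1)) * ∑ k ∈ Finset.range (n + 1), a k with hA
  have hApos : ∀ n, 0 ≤ A n := fun n =>
    mul_nonneg (by positivity) (Finset.sum_nonneg fun k _ => ha k)
  set S : ℝ := ∑' n : ℕ, a n ^ p with hS
  have hS0 : 0 ≤ S := tsum_nonneg fun n => Real.rpow_nonneg (ha n) p
  -- `a n = (n+1) A n - n A (n-1)`
  have han : ∀ n : ℕ, a n = ((n:ℝ) + 1) * A n - (n:ℝ) * A (n - 1) := by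
    intro n
    cases n with
    | zero => simp [hA]
    | succ m =>
      have h1 : ((m:ℝ) + 1 + 1) * A (m + 1) = ∑ k ∈ Finset.range (m + 2), a k := by
        simp only [hA]
        push_cast
        field_simp
      have h2 : ((m:ℝ) + 1) * A m = ∑ k ∈ Finset.range (m + 1), a k := by
        simp only [hA]
        field_simp
      have h3 : m + 1 - 1 = m := rfl
      rw [h3]
      push_cast
      rw [h1, h2, Finset.sum_range_succ]
      ring
  have hconv : ∀ n, (A n ^ (p - 1)) ^ q = A n ^ p := by
    intro n
    rw [← Real.rpow_mul (hApos n), hpq.sub_one_mul_conj]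
  -- key pointwise inequality
  have key : ∀ n : ℕ, (p - 1) * A n ^ p - p * (a n * A n ^ (p - 1)) ≤
      (n:ℝ) * A (n - 1) ^ p - ((n:ℝ) + 1) * A n ^ p := by
    intro n
    have hx := hApos (n - 1)
    have hy := hApos n
    have hyoung := Real.young_inequality_of_nonneg hx
      (Real.rpow_nonneg hy (p - 1)) hpq
    rw [hconv n] at hyoung
    have h1 : p * (A (n - 1) * A n ^ (p - 1)) ≤ A (n - 1) ^ p + (p - 1) * A n ^ p := by
      calc p * (A (n - 1) * A n ^ (p - 1))
          ≤ p * (A (n - 1) ^ p / p + A n ^ p / q) :=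
            mul_le_mul_of_nonneg_left hyoung hp0.le
        _ = A (n - 1) ^ p + (p - 1) * A n ^ p := by
            rw [hq]; field_simp
    have h2 : A n ^ p = A n * A n ^ (p - 1) := by
      have h := Real.rpow_add_of_nonneg hy zero_le_one hp1.le
      have h3 : (1:ℝ) + (p - 1) = p := by ring
      rw [h3, Real.rpow_one] at h
      exact h
    rw [h2] at h1
    rw [han n, h2]
    nlinarith [mul_le_mul_of_nonneg_left h1 (Nat.cast_nonneg n : (0:ℝ) ≤ (n:ℝ))]
  -- telescoping sum
  have sumkey : ∀ N, (p - 1) * ∑ n ∈ Finset.range N, A n ^ p ≤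
      p * ∑ n ∈ Finset.range N, a n * A n ^ (p - 1) := by
    intro N
    set f : ℕ → ℝ := fun n => (n:ℝ) * A (n - 1) ^ p with hf
    have htel : ∑ n ∈ Finset.range N, (f n - f (n + 1)) = f 0 - f N :=
      Finset.sum_range_sub' f N
    have hcong : ∀ n : ℕ, (n:ℝ) * A (n - 1) ^ p - ((n:ℝ) + 1) * A n ^ p = f n - f (n + 1) := by
      intro n
      simp only [hf, Nat.add_sub_cancel]
      push_cast
      ring
    have h := Finset.sum_le_sum (fun n (_ : n ∈ Finset.range N) => key n)
    rw [Finset.sum_congr rfl (fun n _ => hcong n), htel] at h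
    rw [Finset.sum_sub_distrib, ← Finset.mul_sum, ← Finset.mul_sum] at h
    have hf0 : f 0 = 0 := by simp [hf]
    have hfN : 0 ≤ f N := mul_nonneg (Nat.cast_nonneg N) (Real.rpow_nonneg (hApos _) p)
    linarith
  -- uniform bound on partial sums
  have main : ∀ N, ∑ n ∈ Finset.range N, A n ^ p ≤ (p / (p - 1)) ^ p * S := by
    intro N
    set T := ∑ n ∈ Finset.range N, A n ^ p with hT
    have hT0 : 0 ≤ T := Finset.sum_nonneg fun n _ => Real.rpow_nonneg (hApos n) p
    rcases eq_or_lt_of_le hT0 with h0 | h0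
    · rw [← h0]
      positivity
    · have holder := Real.inner_le_Lp_mul_Lq_of_nonneg (s := Finset.range N)
        (f := a) (g := fun n => A n ^ (p - 1)) hpq
        (fun i _ => ha i) (fun i _ => Real.rpow_nonneg (hApos i) _)
      have hTq : ∑ n ∈ Finset.range N, (A n ^ (p - 1)) ^ q = T := by
        rw [hT]
        exact Finset.sum_congr rfl fun n _ => hconv n
      rw [hTq] at holder
      have hSN : ∑ n ∈ Finset.range N, a n ^ p ≤ S :=
        Summable.sum_le_tsum (Finset.range N) (fun i _ => Real.rpow_nonneg (ha i) p) hsum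
      have hSN0 : 0 ≤ ∑ n ∈ Finset.range N, a n ^ p :=
        Finset.sum_nonneg fun i _ => Real.rpow_nonneg (ha i) p
      have hmono : (∑ n ∈ Finset.range N, a n ^ p) ^ (1/p) ≤ S ^ (1/p) :=
        Real.rpow_le_rpow hSN0 hSN (by positivity)
      have hU : ∑ n ∈ Finset.range N, a n * A n ^ (p - 1) ≤ S ^ (1/p) * T ^ (1/q) :=
        holder.trans (mul_le_mul_of_nonneg_right hmono (Real.rpow_nonneg hT0 _))
      have hkey2 : (p - 1) * T ≤ p * (S ^ (1/p) * T ^ (1/q)) := by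
        refine (sumkey N).trans ?_
        exact mul_le_mul_of_nonneg_left hU hp0.le
      have hTsplit : T = T ^ (1/p) * T ^ (1/q) := by
        rw [← Real.rpow_add h0]
        have : 1/p + 1/q = 1 := by
          have := hpq.inv_add_inv_eq_one
          simpa [one_div] using this
        rw [this, Real.rpow_one]
      have hq0 : (0:ℝ) < T ^ (1/q) := Real.rpow_pos_of_pos h0 _
      have hstep : (p - 1) * T ^ (1/p) ≤ p * S ^ (1/p) := by
        have h' : ((p - 1) * T ^ (1/p)) * T ^ (1/q) ≤ (p * S ^ (1/p)) * T ^ (1/q) := by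
          calc ((p - 1) * T ^ (1/p)) * T ^ (1/q) = (p - 1) * (T ^ (1/p) * T ^ (1/q)) := by ring
            _ = (p - 1) * T := by rw [← hTsplit]
            _ ≤ p * (S ^ (1/p) * T ^ (1/q)) := hkey2
            _ = (p * S ^ (1/p)) * T ^ (1/q) := by ring
        exact le_of_mul_le_mul_right h' hq0
      have hstep2 : T ^ (1/p) ≤ (p / (p - 1)) * S ^ (1/p) := by
        rw [div_mul_eq_mul_div, le_div_iff₀ hp1]
        linarith
      have hfin := Real.rpow_le_rpow (Real.rpow_nonneg hT0 _) hstep2 hp0.le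
      rw [← Real.rpow_mul hT0, one_div_mul_cancel hp0.ne', Real.rpow_one,
        Real.mul_rpow (by positivity) (Real.rpow_nonneg hS0 _), ← Real.rpow_mul hS0,
        one_div_mul_cancel hp0.ne', Real.rpow_one] at hfin
      exact hfin
  have hnn : ∀ n, 0 ≤ A n ^ p := fun n => Real.rpow_nonneg (hApos n) p
  exact ⟨summable_of_sum_range_le hnn main, Real.tsum_le_of_sum_range_le hnn main⟩
end

section
/- Let θ : ℝ → ℂ be continuous with support contained in [-1,1], and suppose its Fourier transform satisfies |θ̂(x)| ≤ (1+|x|)^{-a} for some a > 1. Then the trigonometric polynomial k_n^θ(t) := ∑_{|k|≤n} θ(k/(n+1)) e^{ikt} satisfies ‖k_n^θ‖_{L¹(𝕋)} ≤ ‖θ̂‖_{L¹(ℝ)} for every n ≥ 0. -/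
open MeasureTheory

/-- Fourier transform with normalization `f̂(ξ) = (1/2π) ∫ f(x) e^{-iξx} dx`. -/
noncomputable def FT (f : ℝ → ℂ) (ξ : ℝ) : ℂ :=
  (1 / (2 * Real.pi)) * ∫ x : ℝ, f x * Complex.exp (-Complex.I * ξ * x)

/-- The kernel `k_n^θ(t) = ∑_{|k|≤n} θ(k/(n+1)) e^{ikt}`. -/
noncomputable def kern (θ : ℝ → ℂ) (n : ℕ) (t : ℝ) : ℂ :=
  ∑ k ∈ Finset.Icc (-(n : ℤ)) (n : ℤ),
    θ ((k : ℝ) / ((n : ℝ) + 1)) * Complex.exp (Complex.I * (k : ℂ) * (t : ℂ))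

set_option maxHeartbeats 1000000 in
open Real FourierTransform Filter Asymptotics in
/-- If `θ` is continuous with support in `[-1,1]` and `|θ̂(x)| ≤ (1+|x|)^{-a}` for some
`a > 1`, then `‖k_n^θ‖_{L¹(𝕋)} ≤ ‖θ̂‖_{L¹(ℝ)}` for every `n`. -/
theorem kernel_L1_bound (θ : ℝ → ℂ) (hcont : Continuous θ)
    (hsupp : Function.support θ ⊆ Set.Icc (-1 : ℝ) 1)
    (a : ℝ) (ha : 1 < a)
    (hFT : ∀ x : ℝ, ‖FT θ x‖ ≤ (1 + |x|) ^ (-a)) :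
    ∀ n : ℕ,
      (1 / (2 * Real.pi)) * ∫ t in (-Real.pi)..Real.pi, ‖kern θ n t‖ ≤
        ∫ x : ℝ, ‖FT θ x‖ := by
  -- Preliminaries about θ
  have hθ0 : ∀ u : ℝ, 1 ≤ |u| → θ u = 0 := by
    have h1 : Set.EqOn θ 0 (Set.Ioi (1:ℝ)) := by
      intro x hx
      by_contra h
      have := hsupp h
      simp only [Set.mem_Icc] at this
      exact absurd this.2 (not_le.mpr hx)
    have h2 : Set.EqOn θ 0 (Set.Iio (-1:ℝ)) := by
      intro x hx
      by_contra h
      have := hsupp h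
      simp only [Set.mem_Icc] at this
      exact absurd this.1 (not_le.mpr hx)
    have h1' : Set.EqOn θ 0 (Set.Ici (1:ℝ)) := by
      have := h1.closure hcont continuous_const
      rwa [closure_Ioi] at this
    have h2' : Set.EqOn θ 0 (Set.Iic (-1:ℝ)) := by
      have := h2.closure hcont continuous_const
      rwa [closure_Iio] at this
    intro u hu
    rcases le_abs.mp hu with h | h
    · exact h1' h
    · exact h2' (Set.mem_Iic.mpr (by linarith))
  have hcs : HasCompactSupport θ :=
    HasCompactSupport.of_support_subset_isCompact isCompact_Icc hsupp
  have hθint : Integrable θ := hcont.integrable_of_hasCompactSupport hcs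
  have hπ : (0:ℝ) < Real.pi := Real.pi_pos
  -- FT θ is continuous
  have hFTeq : ∀ ξ : ℝ, FT θ ξ
      = (1/(2*Real.pi) : ℂ) * 𝓕 θ (ξ / (2*Real.pi)) := by
    intro ξ
    rw [Real.fourier_real_eq_integral_exp_smul]
    unfold FT
    congr 1
    congr 1 with x
    rw [smul_eq_mul, mul_comm]
    congr 1
    congr 1
    push_cast
    have h : (2*(Real.pi:ℂ)) ≠ 0 := by
      simp [Real.pi_ne_zero]
    field_simp
  have hFTcont : Continuous (FT θ) := by
    have h𝓕 : Continuous (𝓕 θ) :=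
      VectorFourier.fourierIntegral_continuous Real.continuous_fourierChar
        (innerSL ℝ).continuous₂ hθint
    have : Continuous fun ξ : ℝ =>
        (1/(2*Real.pi) : ℂ) * 𝓕 θ (ξ / (2*Real.pi)) :=
      continuous_const.mul (h𝓕.comp (continuous_id.div_const _))
    exact this.congr fun ξ => (hFTeq ξ).symm
  set g : ℝ → ℝ := fun x => ‖FT θ x‖ with hgdef
  have hgcont : Continuous g := hFTcont.norm
  have hgnn : ∀ x, 0 ≤ g x := fun x => norm_nonneg _
  have hgint : Integrable g := by
    have hmaj : Integrable fun x : ℝ => (1 + ‖x‖) ^ (-a) := by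
      have := integrable_one_add_norm (E := ℝ) (μ := volume) (r := a) (by simpa using ha)
      exact this
    refine hmaj.mono hgcont.aestronglyMeasurable (Filter.Eventually.of_forall fun x => ?_)
    rw [Real.norm_of_nonneg (hgnn x), Real.norm_of_nonneg (by positivity)]
    simpa using hFT x
  intro n
  set N : ℝ := (n : ℝ) + 1 with hNdef
  have hN : (0:ℝ) < N := by positivity
  have hN1 : (1:ℝ) ≤ N := by
    simp only [hNdef, le_add_iff_nonneg_left]
    positivity
  have hNne : (N:ℂ) ≠ 0 := by exact_mod_cast hN.ne'
  -- The Fourier integral of the rescaled modulated function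
  have hFf : ∀ t ξ : ℝ,
      𝓕 (fun y => θ (y / N) * Complex.exp (Complex.I * t * y)) ξ
        = (2 * Real.pi * N : ℂ) * FT θ (N * (2 * Real.pi * ξ - t)) := by
    intro t ξ
    rw [Real.fourier_real_eq_integral_exp_smul]
    have hstep : ∀ y : ℝ,
        Complex.exp (↑(-2 * Real.pi * y * ξ) * Complex.I) •
          (θ (y / N) * Complex.exp (Complex.I * t * y))
        = (fun u : ℝ => θ u *
            Complex.exp (-Complex.I * (N * (2 * Real.pi * ξ - t)) * u)) (y / N) := by
      intro y
      simp only [smul_eq_mul]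
      rw [mul_left_comm, ← Complex.exp_add]
      congr 1
      push_cast
      rw [show -Complex.I * (↑N * (2 * ↑Real.pi * ↑ξ - ↑t)) * (↑y / ↑N)
          = -Complex.I * (2 * ↑Real.pi * ↑ξ - ↑t) * (↑N * (↑y / ↑N)) by ring,
        mul_div_cancel₀ _ hNne]
      ring
    simp_rw [hstep]
    rw [Measure.integral_comp_div (fun u : ℝ => θ u *
      Complex.exp (-Complex.I * (N * (2 * Real.pi * ξ - t)) * u)) N]
    unfold FT
    rw [abs_of_pos hN, Complex.real_smul]
    push_cast
    have hπc : (2*(Real.pi:ℂ)) ≠ 0 := by simp [Real.pi_ne_zero]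
    field_simp
  -- summability of translates, for |t| ≤ π
  have hsummg : ∀ t : ℝ, |t| ≤ Real.pi →
      Summable fun m : ℤ => g (N * (2 * Real.pi * m - t)) := by
    intro t ht
    refine summable_of_isBigO (Real.summable_abs_int_rpow ha) ?_
    rw [isBigO_iff]
    refine ⟨Real.pi ^ (-a), (Filter.eventually_cofinite_ne (0:ℤ)).mono fun m hm => ?_⟩
    have hm1 : (1:ℝ) ≤ |(m:ℝ)| := by
      rw [← Int.cast_abs]
      exact_mod_cast Int.one_le_abs hm
    have habs : Real.pi * |(m:ℝ)| ≤ |N * (2 * Real.pi * m - t)| := by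
      rw [abs_mul, abs_of_pos hN]
      have h2 : 2 * Real.pi * |(m:ℝ)| - Real.pi ≤ |2 * Real.pi * m - t| := by
        have := abs_sub_abs_le_abs_sub (2 * Real.pi * (m:ℝ)) t
        have h3 : |2 * Real.pi * (m:ℝ)| = 2 * Real.pi * |(m:ℝ)| := by
          rw [abs_mul, abs_of_pos (by positivity : (0:ℝ) < 2 * Real.pi)]
        nlinarith [abs_nonneg (2 * Real.pi * (m:ℝ) - t)]
      have h4 : Real.pi * |(m:ℝ)| ≤ 2 * Real.pi * |(m:ℝ)| - Real.pi := by nlinarith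
      calc Real.pi * |(m:ℝ)| ≤ |2 * Real.pi * m - t| := le_trans h4 h2
        _ ≤ N * |2 * Real.pi * m - t| := by nlinarith [abs_nonneg (2 * Real.pi * (m:ℝ) - t)]
    have hle : g (N * (2 * Real.pi * m - t)) ≤ Real.pi ^ (-a) * |(m:ℝ)| ^ (-a) := by
      calc g (N * (2 * Real.pi * m - t))
          ≤ (1 + |N * (2 * Real.pi * m - t)|) ^ (-a) := hFT _
        _ ≤ (Real.pi * |(m:ℝ)|) ^ (-a) := by
            apply Real.rpow_le_rpow_of_nonpos (by positivity) (by nlinarith [abs_nonneg (N * (2 * Real.pi * m - t))]) (by linarith)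
        _ = Real.pi ^ (-a) * |(m:ℝ)| ^ (-a) :=
            Real.mul_rpow hπ.le (abs_nonneg _)
    rw [Real.norm_of_nonneg (hgnn _), Real.norm_of_nonneg (by positivity)]
    exact hle
  -- the Poisson summation identity
  have key : ∀ t : ℝ, |t| ≤ Real.pi →
      kern θ n t = ∑' m : ℤ, (2 * Real.pi * N : ℂ) * FT θ (N * (2 * Real.pi * m - t)) := by
    intro t ht
    set f : ℝ → ℂ := fun y => θ (y / N) * Complex.exp (Complex.I * t * y) with hfdef
    have hfc : Continuous f :=
      (hcont.comp (continuous_id.div_const N)).mul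
        (Complex.continuous_exp.comp (by continuity))
    have hfsupp : ∀ y : ℝ, N ≤ |y| → f y = 0 := by
      intro y hy
      have : θ (y / N) = 0 := by
        apply hθ0
        rw [abs_div, abs_of_pos hN, le_div_iff₀ hN, one_mul]
        exact hy
      simp [hfdef, this]
    have hfO : f =O[cocompact ℝ] (fun x => |x| ^ (-a)) := by
      rw [isBigO_iff]
      refine ⟨0, ?_⟩
      have hmem : (Set.Icc (-N) N)ᶜ ∈ cocompact ℝ :=
        (isCompact_Icc (a := -N) (b := N)).compl_mem_cocompact
      filter_upwards [hmem] with y hy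
      have : N ≤ |y| := by
        simp only [Set.mem_compl_iff, Set.mem_Icc, not_and_or, not_le] at hy
        rcases hy with h | h
        · rw [abs_of_neg (by linarith)]; linarith
        · rw [abs_of_pos (by linarith)]; linarith
      simp [hfsupp y this]
    have hnormsum : Summable fun m : ℤ =>
        ‖(2 * Real.pi * N : ℂ) * FT θ (N * (2 * Real.pi * m - t))‖ := by
      have := (hsummg t ht).mul_left (2 * Real.pi * N)
      refine this.congr fun m => ?_
      rw [norm_mul]
      congr 1
      simp [abs_of_pos hπ, abs_of_pos hN]
    have hFsum : Summable fun m : ℤ => 𝓕 f m := by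
      apply Summable.of_norm
      refine hnormsum.congr fun m => ?_
      rw [hFf t m]
    have hpoisson := Real.tsum_eq_tsum_fourier_of_rpow_decay_of_summable hfc ha hfO hFsum 0
    have hlhs : ∑' k : ℤ, f (0 + k) = kern θ n t := by
      have hvanish : ∀ k : ℤ, k ∉ Finset.Icc (-(n:ℤ)) (n:ℤ) → f (0 + k) = 0 := by
        intro k hk
        simp only [Finset.mem_Icc, not_and_or, not_le] at hk
        have hknorm : N ≤ |(k:ℝ)| := by
          have : (n:ℤ) + 1 ≤ |k| := by
            rcases hk with h | h
            · rw [abs_of_neg (by omega)]; omega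
            · rw [abs_of_pos (by omega)]; omega
          have : ((n:ℤ) + 1 : ℝ) ≤ |(k:ℝ)| := by
            rw [← Int.cast_abs]
            exact_mod_cast this
          simpa [hNdef] using this
        rw [zero_add]
        exact hfsupp k hknorm
      rw [tsum_eq_sum hvanish]
      unfold kern
      apply Finset.sum_congr rfl
      intro k _
      rw [zero_add]
      simp only [hfdef, hNdef]
      push_cast
      ring_nf
    have hrhs : ∑' m : ℤ, 𝓕 f m * fourier m ((0:ℝ) : UnitAddCircle)
        = ∑' m : ℤ, (2 * Real.pi * N : ℂ) * FT θ (N * (2 * Real.pi * m - t)) := by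
      apply tsum_congr
      intro m
      rw [hFf t m]
      norm_cast
      rw [fourier_eval_zero, mul_one]
    rw [hlhs, hrhs] at hpoisson
    exact hpoisson
  -- pointwise norm bound
  have hptbound : ∀ t : ℝ, |t| ≤ Real.pi →
      ‖kern θ n t‖ ≤ 2 * Real.pi * N * ∑' m : ℤ, g (N * (2 * Real.pi * m - t)) := by
    intro t ht
    rw [key t ht]
    have hnormsum : Summable fun m : ℤ =>
        ‖(2 * Real.pi * N : ℂ) * FT θ (N * (2 * Real.pi * m - t))‖ := by
      have := (hsummg t ht).mul_left (2 * Real.pi * N)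
      refine this.congr fun m => ?_
      rw [norm_mul]
      congr 1
      simp [abs_of_pos hπ, abs_of_pos hN]
    calc ‖∑' m : ℤ, (2 * Real.pi * N : ℂ) * FT θ (N * (2 * Real.pi * m - t))‖
        ≤ ∑' m : ℤ, ‖(2 * Real.pi * N : ℂ) * FT θ (N * (2 * Real.pi * m - t))‖ :=
          norm_tsum_le_tsum_norm hnormsum
      _ = ∑' m : ℤ, 2 * Real.pi * N * g (N * (2 * Real.pi * m - t)) := by
          apply tsum_congr
          intro m
          rw [norm_mul]
          congr 1
          simp [abs_of_pos hπ, abs_of_pos hN]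
      _ = 2 * Real.pi * N * ∑' m : ℤ, g (N * (2 * Real.pi * m - t)) := by
          rw [tsum_mul_left]
  -- Integration step
  have hab : -Real.pi ≤ Real.pi := by linarith
  have hkerncont : Continuous fun t => ‖kern θ n t‖ := by
    apply Continuous.norm
    unfold kern
    apply continuous_finset_sum
    intro k _
    exact continuous_const.mul (Complex.continuous_exp.comp
      (continuous_const.mul Complex.continuous_ofReal))
  set s : ℤ → Set ℝ := fun m =>
    Set.Ioc (-(Real.pi*N) + m • (2*Real.pi*N)) (-(Real.pi*N) + (m+1) • (2*Real.pi*N)) with hsdef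
  have hUnion : (⋃ m : ℤ, s m) = Set.univ :=
    iUnion_Ioc_add_zsmul (by positivity) _
  have hdisj : Pairwise (Function.onFun Disjoint s) :=
    Set.pairwise_disjoint_Ioc_add_zsmul _ _
  have hHasSum : HasSum (fun m : ℤ => ∫ x in s m, g x) (∫ x : ℝ, g x) := by
    have h := hasSum_integral_iUnion (μ := volume) (f := g) (fun m => measurableSet_Ioc) hdisj
      (by rw [hUnion]; exact hgint.integrableOn)
    rwa [hUnion, Measure.restrict_univ] at h
  have hJ : ∀ m : ℤ, (∫ t in Set.Ioc (-Real.pi) Real.pi,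
      2*Real.pi*N * g (N*(2*Real.pi*m - t))) = 2*Real.pi * ∫ x in s m, g x := by
    intro m
    rw [← intervalIntegral.integral_of_le hab, intervalIntegral.integral_const_mul]
    have h1 : (∫ t in (-Real.pi)..Real.pi, g (N*(2*Real.pi*m - t)))
        = ∫ u in (2*Real.pi*m - Real.pi)..(2*Real.pi*m + Real.pi), g (N*u) := by
      have h := intervalIntegral.integral_comp_sub_left (a := -Real.pi) (b := Real.pi)
        (fun u => g (N*u)) (2*Real.pi*m)
      simpa [sub_neg_eq_add] using h
    have h2 : (∫ u in (2*Real.pi*m - Real.pi)..(2*Real.pi*m + Real.pi), g (N*u))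
        = N⁻¹ • ∫ x in (N*(2*Real.pi*m - Real.pi))..(N*(2*Real.pi*m + Real.pi)), g x :=
      intervalIntegral.integral_comp_mul_left g hN.ne'
    rw [h1, h2, intervalIntegral.integral_of_le
      (by nlinarith : N*(2*Real.pi*m - Real.pi) ≤ N*(2*Real.pi*m + Real.pi)), smul_eq_mul]
    have hseq : s m = Set.Ioc (N*(2*Real.pi*m - Real.pi)) (N*(2*Real.pi*m + Real.pi)) := by
      simp only [hsdef, zsmul_eq_mul]
      congr 1 <;> push_cast <;> ring
    rw [hseq]
    field_simp
  have hRHSmeas : Measurable fun t : ℝ =>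
      ∑' m : ℤ, ENNReal.ofReal (2*Real.pi*N * g (N*(2*Real.pi*m - t))) := by
    apply Measurable.ennreal_tsum
    intro m
    exact ENNReal.measurable_ofReal.comp
      (((hgcont.comp (continuous_const.mul (continuous_const.sub continuous_id))).measurable).const_mul _)
  have hchain : (∫⁻ t in Set.Ioc (-Real.pi) Real.pi, ENNReal.ofReal ‖kern θ n t‖)
      ≤ ENNReal.ofReal (2*Real.pi * ∫ x : ℝ, g x) := by
    calc ∫⁻ t in Set.Ioc (-Real.pi) Real.pi, ENNReal.ofReal ‖kern θ n t‖
        ≤ ∫⁻ t in Set.Ioc (-Real.pi) Real.pi,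
            ∑' m : ℤ, ENNReal.ofReal (2*Real.pi*N * g (N*(2*Real.pi*m - t))) := by
          apply setLIntegral_mono hRHSmeas
          intro t ht
          have ht' : |t| ≤ Real.pi := abs_le.mpr ⟨(ht.1).le, ht.2⟩
          calc ENNReal.ofReal ‖kern θ n t‖
              ≤ ENNReal.ofReal (2*Real.pi*N * ∑' m : ℤ, g (N*(2*Real.pi*m - t))) :=
                ENNReal.ofReal_le_ofReal (hptbound t ht')
            _ = ∑' m : ℤ, ENNReal.ofReal (2*Real.pi*N * g (N*(2*Real.pi*m - t))) := by
                rw [← tsum_mul_left, ENNReal.ofReal_tsum_of_nonneg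
                  (fun m => by positivity) ((hsummg t ht').mul_left _)]
      _ = ∑' m : ℤ, ∫⁻ t in Set.Ioc (-Real.pi) Real.pi,
            ENNReal.ofReal (2*Real.pi*N * g (N*(2*Real.pi*m - t))) :=
          lintegral_tsum fun m => (ENNReal.measurable_ofReal.comp
            (((hgcont.comp (continuous_const.mul (continuous_const.sub continuous_id))).measurable).const_mul _)).aemeasurable
      _ = ∑' m : ℤ, ENNReal.ofReal (∫ t in Set.Ioc (-Real.pi) Real.pi,
            2*Real.pi*N * g (N*(2*Real.pi*m - t))) := by
          apply tsum_congr
          intro m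
          rw [← ofReal_integral_eq_lintegral_ofReal]
          · exact (continuous_const.mul
              (hgcont.comp (continuous_const.mul
                (continuous_const.sub continuous_id)))).integrableOn_Ioc
          · exact Filter.Eventually.of_forall fun t => by positivity
      _ = ∑' m : ℤ, ENNReal.ofReal (2*Real.pi * ∫ x in s m, g x) := by
          apply tsum_congr
          intro m
          rw [hJ m]
      _ = ENNReal.ofReal (∑' m : ℤ, 2*Real.pi * ∫ x in s m, g x) := by
          rw [ENNReal.ofReal_tsum_of_nonneg
            (fun m => mul_nonneg (by positivity)
              (setIntegral_nonneg measurableSet_Ioc fun x _ => hgnn x))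
            (hHasSum.mul_left _).summable]
      _ = ENNReal.ofReal (2*Real.pi * ∫ x : ℝ, g x) := by
          rw [(hHasSum.mul_left (2*Real.pi)).tsum_eq]
  have hmain : (∫ t in (-Real.pi)..Real.pi, ‖kern θ n t‖) ≤ 2*Real.pi * ∫ x : ℝ, g x := by
    rw [intervalIntegral.integral_of_le hab,
      integral_eq_lintegral_of_nonneg_ae (Filter.Eventually.of_forall fun t => norm_nonneg _)
        hkerncont.aestronglyMeasurable.restrict]
    have hrhsnn : 0 ≤ 2*Real.pi * ∫ x : ℝ, g x :=
      mul_nonneg (by positivity) (integral_nonneg hgnn)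
    calc (∫⁻ t in Set.Ioc (-Real.pi) Real.pi, ENNReal.ofReal ‖kern θ n t‖).toReal
        ≤ (ENNReal.ofReal (2*Real.pi * ∫ x : ℝ, g x)).toReal :=
          ENNReal.toReal_mono ENNReal.ofReal_ne_top hchain
      _ = 2*Real.pi * ∫ x : ℝ, g x := ENNReal.toReal_ofReal hrhsnn
  calc 1/(2*Real.pi) * ∫ t in (-Real.pi)..Real.pi, ‖kern θ n t‖
      ≤ 1/(2*Real.pi) * (2*Real.pi * ∫ x : ℝ, g x) :=
        mul_le_mul_of_nonneg_left hmain (by positivity)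
    _ = ∫ x : ℝ, g x := by
        field_simp
end

section
/- Let θ : ℝ → ℂ be continuous with support in [-1,1], with |θ̂(x)| ≤ (1+|x|)^{-a} for some a > 1. Then there is a constant C, depending only on ‖θ‖_∞, sup_x |θ̂(x)||x|^a, and a, such that the kernel k_n^θ(t) := ∑_{|k|≤n} θ(k/(n+1)) e^{ikt} satisfies |k_n^θ(x)| ≤ C · min{ n+1, (n+1)^{-(a-1)} |x|^{-a} } for all |x| < π. -/
open MeasureTheory

open scoped FourierTransform

lemma FT_scale (θ : ℝ → ℂ) {N : ℝ} (hN : 0 < N) (x ξ : ℝ) :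
    𝓕 (fun t : ℝ => θ (t / N) * Complex.exp (Complex.I * (t:ℂ) * (x:ℂ))) ξ
      = (N : ℂ) * (2 * Real.pi * FT θ (N * (2 * Real.pi * ξ - x))) := by
  have hNne : (N:ℂ) ≠ 0 := by exact_mod_cast hN.ne'
  have h2π : (2 * (Real.pi:ℂ)) ≠ 0 := by
    simp [Real.pi_ne_zero]
  rw [Real.fourier_real_eq_integral_exp_smul]
  have h1 : ∀ v : ℝ, Complex.exp (((-2 * Real.pi * v * ξ : ℝ) : ℂ) * Complex.I) •
      (θ (v / N) * Complex.exp (Complex.I * (v:ℂ) * (x:ℂ)))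
      = (fun s : ℝ => θ s *
          Complex.exp (-Complex.I * ((N * (2 * Real.pi * ξ - x) : ℝ) : ℂ) * (s : ℂ))) (v / N) := by
    intro v
    simp only [smul_eq_mul]
    have e1 : Complex.exp (((-2 * Real.pi * v * ξ : ℝ) : ℂ) * Complex.I) *
        (θ (v / N) * Complex.exp (Complex.I * (v:ℂ) * (x:ℂ)))
        = θ (v / N) * Complex.exp (((-2 * Real.pi * v * ξ : ℝ) : ℂ) * Complex.I
            + Complex.I * (v:ℂ) * (x:ℂ)) := by
      rw [Complex.exp_add]; ring
    rw [e1]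
    congr 1
    congr 1
    push_cast
    field_simp
    ring
  simp_rw [h1]
  rw [MeasureTheory.Measure.integral_comp_div
    (fun s : ℝ => θ s * Complex.exp (-Complex.I * ((N * (2 * Real.pi * ξ - x) : ℝ) : ℂ) * (s : ℂ))) N,
    abs_of_pos hN, FT, Complex.real_smul]
  congr 1
  rw [← mul_assoc, mul_one_div, div_self h2π, one_mul]

-- weight function
noncomputable def wgt (a : ℝ) (m : ℤ) : ℝ := if m = 0 then 1 else |(m:ℝ)| ^ (-a)

lemma wgt_nonneg (a : ℝ) (m : ℤ) : 0 ≤ wgt a m := by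
  unfold wgt; split <;> positivity

lemma wgt_summable {a : ℝ} (ha : 1 < a) : Summable (wgt a) := by
  have h1 : Summable fun m : ℤ => |(m:ℝ)| ^ (-a) := Real.summable_abs_int_rpow ha
  have h2 : Summable fun m : ℤ => (if m = 0 then (1:ℝ) else 0) := by
    apply summable_of_ne_finset_zero (s := {0})
    intro m hm
    simp only [Finset.mem_singleton] at hm
    simp [hm]
  have := h1.add h2
  apply this.congr
  intro m
  unfold wgt
  by_cases hm : m = 0 <;> simp [hm, Real.zero_rpow (by linarith : -a ≠ 0)]

/-- Key arithmetic estimate. -/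
lemma term_bound {a N x : ℝ} (ha : 1 < a) (hN : 1 ≤ N) (hx : |x| < Real.pi) (hx0 : x ≠ 0)
    (m : ℤ) :
    (1 + N * |2 * Real.pi * m - x|) ^ (-a) ≤ N ^ (-a) * |x| ^ (-a) * wgt a m := by
  have hxpos : 0 < |x| := abs_pos.mpr hx0
  have hN0 : 0 < N := lt_of_lt_of_le one_pos hN
  have key : ∀ y : ℝ, 0 < y → y ≤ N * |2 * Real.pi * m - x| →
      (1 + N * |2 * Real.pi * m - x|) ^ (-a) ≤ y ^ (-a) := by
    intro y hy hyle
    exact Real.rpow_le_rpow_of_nonpos hy (by linarith) (by linarith)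
  by_cases hm : m = 0
  · subst hm
    have h1 : N * |x| ≤ N * |2 * Real.pi * ((0:ℤ):ℝ) - x| := by
      push_cast
      simp [abs_neg]
    have := key (N * |x|) (by positivity) h1
    rw [Real.mul_rpow hN0.le hxpos.le] at this
    simpa [wgt] using this
  · have hm1 : (1:ℝ) ≤ |(m:ℝ)| := by
      have : (1:ℤ) ≤ |m| := Int.one_le_abs hm
      calc (1:ℝ) ≤ (|m|:ℤ) := by exact_mod_cast this
        _ = |(m:ℝ)| := by push_cast; rfl
    have hpi : 0 < Real.pi := Real.pi_pos
    have habs : |x| * |(m:ℝ)| ≤ |2 * Real.pi * m - x| := by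
      have h1 : |(2 * Real.pi * m : ℝ)| - |x| ≤ |2 * Real.pi * m - x| := by
        have := abs_sub_abs_le_abs_sub (2 * Real.pi * (m:ℝ)) x
        linarith
      have h2 : |(2 * Real.pi * m : ℝ)| = 2 * Real.pi * |(m:ℝ)| := by
        rw [abs_mul, abs_of_pos (by positivity : (0:ℝ) < 2 * Real.pi)]
      nlinarith [abs_nonneg x, hxpos]
    have h3 : N * (|x| * |(m:ℝ)|) ≤ N * |2 * Real.pi * m - x| :=
      mul_le_mul_of_nonneg_left habs hN0.le
    have := key (N * (|x| * |(m:ℝ)|)) (by positivity) h3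
    have hsplit : (N * (|x| * |(m:ℝ)|)) ^ (-a) = N ^ (-a) * (|x| ^ (-a) * |(m:ℝ)| ^ (-a)) := by
      rw [Real.mul_rpow hN0.le (by positivity), Real.mul_rpow hxpos.le (abs_nonneg _)]
    rw [hsplit] at this
    calc (1 + N * |2 * Real.pi * m - x|) ^ (-a)
        ≤ N ^ (-a) * (|x| ^ (-a) * |(m:ℝ)| ^ (-a)) := this
      _ = N ^ (-a) * |x| ^ (-a) * wgt a m := by
          unfold wgt; rw [if_neg hm]; ring

/-- If `θ` is continuous with support in `[-1,1]` and `|θ̂(x)| ≤ (1+|x|)^{-a}` for some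
`a > 1`, then there is a constant `C` with
`|k_n^θ(x)| ≤ C · min (n+1) ((n+1)^{-(a-1)} |x|^{-a})` for all `|x| < π`
(the second bound being stated for `x ≠ 0`). -/
theorem kernel_pointwise_bound (θ : ℝ → ℂ) (hcont : Continuous θ)
    (hsupp : Function.support θ ⊆ Set.Icc (-1 : ℝ) 1)
    (a : ℝ) (ha : 1 < a)
    (hFT : ∀ x : ℝ, ‖FT θ x‖ ≤ (1 + |x|) ^ (-a)) :
    ∃ C : ℝ, 0 < C ∧ ∀ (n : ℕ) (x : ℝ), |x| < Real.pi →
      ‖kern θ n x‖ ≤ C * ((n : ℝ) + 1) ∧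
      (x ≠ 0 → ‖kern θ n x‖ ≤ C * ((n : ℝ) + 1) ^ (-(a - 1)) * |x| ^ (-a)) := by
  have hopen : IsOpen (Function.support θ) := by
    rw [Function.support_eq_preimage]
    exact isOpen_compl_singleton.preimage hcont
  have hsuppo : Function.support θ ⊆ Set.Ioo (-1 : ℝ) 1 := by
    rw [← interior_Icc]
    exact interior_maximal hsupp hopen
  have hzero : ∀ t : ℝ, 1 ≤ |t| → θ t = 0 := by
    intro t ht
    by_contra h
    have h2 := hsuppo (Function.mem_support.mpr h)
    rw [Set.mem_Ioo] at h2
    have : |t| < 1 := abs_lt.mpr ⟨h2.1, h2.2⟩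
    linarith
  have hcs : HasCompactSupport θ := by
    apply HasCompactSupport.intro (isCompact_Icc (a := (-1:ℝ)) (b := 1))
    intro t ht
    apply hzero
    rw [Set.mem_Icc, not_and_or] at ht
    rcases ht with h | h
    · rw [le_abs]; right; linarith [not_le.mp h]
    · rw [le_abs]; left; linarith [not_le.mp h]
  obtain ⟨M0, hM0⟩ := hcs.exists_bound_of_continuous hcont
  set M : ℝ := max M0 0 with hM
  have hMnn : 0 ≤ M := le_max_right _ _
  have hMb : ∀ t, ‖θ t‖ ≤ M := fun t => (hM0 t).trans (le_max_left _ _)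
  set S : ℝ := ∑' m : ℤ, wgt a m with hSdef
  have hSnn : 0 ≤ S := tsum_nonneg (wgt_nonneg a)
  refine ⟨2 * Real.pi * S + 2 * M + 1, by nlinarith [Real.pi_pos], ?_⟩
  intro n x hxπ
  have hN0 : (0:ℝ) < (n:ℝ) + 1 := by positivity
  have hN1 : (1:ℝ) ≤ (n:ℝ) + 1 := by
    have : (0:ℝ) ≤ (n:ℝ) := Nat.cast_nonneg n
    linarith
  constructor
  · -- easy bound
    have hb : ‖kern θ n x‖ ≤ ∑ k ∈ Finset.Icc (-(n:ℤ)) (n:ℤ), M := by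
      refine (norm_sum_le _ _).trans (Finset.sum_le_sum ?_)
      intro k _
      rw [norm_mul]
      have he : ‖Complex.exp (Complex.I * (k:ℂ) * (x:ℂ))‖ = 1 := by
        have h3 : Complex.I * (k:ℂ) * (x:ℂ) = (((k:ℝ) * x : ℝ) : ℂ) * Complex.I := by
          push_cast; ring
        rw [h3, Complex.norm_exp_ofReal_mul_I]
      rw [he, mul_one]
      exact hMb _
    rw [Finset.sum_const, nsmul_eq_mul] at hb
    have hcard : (((Finset.Icc (-(n:ℤ)) (n:ℤ)).card : ℕ) : ℝ) ≤ 2 * ((n:ℝ) + 1) := by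
      rw [Int.card_Icc]
      have h4 : ((n:ℤ) + 1 - -(n:ℤ)).toNat = 2 * n + 1 := by omega
      rw [h4]
      push_cast
      linarith
    calc ‖kern θ n x‖ ≤ ((Finset.Icc (-(n:ℤ)) (n:ℤ)).card : ℝ) * M := hb
      _ ≤ 2 * ((n:ℝ) + 1) * M := mul_le_mul_of_nonneg_right hcard hMnn
      _ ≤ (2 * Real.pi * S + 2 * M + 1) * ((n:ℝ) + 1) := by
          nlinarith [mul_nonneg (mul_nonneg Real.pi_pos.le hSnn) hN0.le, hN0.le, hMnn]
  · intro hx0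
    set N : ℝ := (n:ℝ) + 1 with hNdef
    set f : ℝ → ℂ := fun t : ℝ => θ (t / N) * Complex.exp (Complex.I * (t:ℂ) * (x:ℂ)) with hfdef
    have hfc : Continuous f := by
      apply Continuous.mul
      · exact hcont.comp (continuous_id.div_const N)
      · exact Complex.continuous_exp.comp
          ((continuous_const.mul Complex.continuous_ofReal).mul continuous_const)
    have hθN : ∀ t : ℝ, N ≤ |t| → θ (t / N) = 0 := by
      intro t ht
      apply hzero
      rw [abs_div, abs_of_pos hN0, le_div_iff₀ hN0, one_mul]
      exact ht
    have hfz : ∀ t : ℝ, t ∉ Set.Icc (-N) N → f t = 0 := by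
      intro t ht
      have : N ≤ |t| := by
        rw [Set.mem_Icc, not_and_or] at ht
        rcases ht with h | h
        · rw [le_abs]; right; linarith [not_le.mp h]
        · rw [le_abs]; left; linarith [not_le.mp h]
      simp [hfdef, hθN t this]
    have hfO : f =O[Filter.cocompact ℝ] fun t => |t| ^ (-a) := by
      rw [Asymptotics.isBigO_iff]
      refine ⟨0, ?_⟩
      have hev : ∀ᶠ t in Filter.cocompact ℝ, f t = 0 := by
        rw [Filter.eventually_iff, Filter.mem_cocompact]
        exact ⟨Set.Icc (-N) N, isCompact_Icc, fun t ht => hfz t ht⟩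
      filter_upwards [hev] with t ht
      simp [ht]
    have hFb : ∀ m : ℤ, ‖𝓕 f (m:ℝ)‖ ≤
        2 * Real.pi * N * (N ^ (-a) * |x| ^ (-a) * wgt a m) := by
      intro m
      rw [hfdef, FT_scale θ hN0 x (m:ℝ)]
      have h5 : ‖(N:ℂ) * (2 * Real.pi * FT θ (N * (2 * Real.pi * (m:ℝ) - x)))‖
          = N * (2 * Real.pi * ‖FT θ (N * (2 * Real.pi * (m:ℝ) - x))‖) := by
        rw [norm_mul, norm_mul]
        simp only [Complex.norm_real, Real.norm_eq_abs, abs_of_pos hN0]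
        norm_num [abs_of_pos Real.pi_pos]
      rw [h5]
      have h6 : ‖FT θ (N * (2 * Real.pi * (m:ℝ) - x))‖ ≤
          (1 + N * |2 * Real.pi * (m:ℝ) - x|) ^ (-a) := by
        have := hFT (N * (2 * Real.pi * (m:ℝ) - x))
        rwa [abs_mul, abs_of_pos hN0] at this
      have h7 := (h6.trans (term_bound ha hN1 hxπ hx0 m))
      calc N * (2 * Real.pi * ‖FT θ (N * (2 * Real.pi * (m:ℝ) - x))‖)
          ≤ N * (2 * Real.pi * (N ^ (-a) * |x| ^ (-a) * wgt a m)) := by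
            apply mul_le_mul_of_nonneg_left _ hN0.le
            exact mul_le_mul_of_nonneg_left h7 (by positivity)
        _ = 2 * Real.pi * N * (N ^ (-a) * |x| ^ (-a) * wgt a m) := by ring
    have hmaj : Summable (fun m : ℤ =>
        2 * Real.pi * N * (N ^ (-a) * |x| ^ (-a) * wgt a m)) := by
      exact ((wgt_summable ha).mul_left
        (2 * Real.pi * N * (N ^ (-a) * |x| ^ (-a)))).congr (fun m => by ring)
    have hFf : Summable fun m : ℤ => 𝓕 f (m:ℝ) :=
      Summable.of_norm_bounded hmaj hFb
    have hP := Real.tsum_eq_tsum_fourier_of_rpow_decay_of_summable hfc ha hfO hFf 0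
    simp only [zero_add, QuotientAddGroup.mk_zero, fourier_eval_zero, mul_one] at hP
    have hvanish : ∀ k : ℤ, k ∉ Finset.Icc (-(n:ℤ)) (n:ℤ) → f ((k:ℤ):ℝ) = 0 := by
      intro k hk
      simp only [Finset.mem_Icc, not_and_or, not_le] at hk
      have hNk : N ≤ |(k:ℝ)| := by
        rw [hNdef, le_abs]
        rcases hk with h | h
        · right
          have h9 : k ≤ -((n:ℤ) + 1) := by omega
          have h10 : (k:ℝ) ≤ -(((n:ℤ):ℝ) + 1) := by exact_mod_cast h9
          push_cast at h10 ⊢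
          linarith
        · left
          have h9 : ((n:ℤ) + 1) ≤ k := by omega
          have h10 : (((n:ℤ):ℝ) + 1) ≤ (k:ℝ) := by exact_mod_cast h9
          push_cast at h10 ⊢
          linarith
      have h11 := hθN ((k:ℤ):ℝ) hNk
      simp [hfdef, h11]
    have hL : kern θ n x = ∑' m : ℤ, 𝓕 f (m:ℝ) := by
      rw [← hP]
      rw [tsum_eq_sum (s := Finset.Icc (-(n:ℤ)) (n:ℤ)) hvanish]
      apply Finset.sum_congr rfl
      intro k _
      simp only [hfdef, Complex.ofReal_intCast, hNdef]
    rw [hL]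
    have hnorms : Summable (fun m : ℤ => ‖𝓕 f (m:ℝ)‖) :=
      Summable.of_nonneg_of_le (fun _ => norm_nonneg _) hFb hmaj
    have hNsplit : N * N ^ (-a) = N ^ (-(a - 1)) := by
      have h9 : -(a - 1) = 1 + -a := by ring
      rw [h9, Real.rpow_add hN0, Real.rpow_one]
    calc ‖∑' m : ℤ, 𝓕 f (m:ℝ)‖ ≤ ∑' m : ℤ, ‖𝓕 f (m:ℝ)‖ := norm_tsum_le_tsum_norm hnorms
      _ ≤ ∑' m : ℤ, 2 * Real.pi * N * (N ^ (-a) * |x| ^ (-a) * wgt a m) :=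
          Summable.tsum_le_tsum hFb hnorms hmaj
      _ = 2 * Real.pi * N * (N ^ (-a) * |x| ^ (-a)) * S := by
          rw [hSdef, ← tsum_mul_left]
          exact tsum_congr (fun m => by ring)
      _ = 2 * Real.pi * S * (N ^ (-(a - 1)) * |x| ^ (-a)) := by
          rw [← hNsplit]; ring
      _ ≤ (2 * Real.pi * S + 2 * M + 1) * (N ^ (-(a - 1)) * |x| ^ (-a)) := by
          apply mul_le_mul_of_nonneg_right (by linarith) (by positivity)
      _ = (2 * Real.pi * S + 2 * M + 1) * N ^ (-(a - 1)) * |x| ^ (-a) := by ring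
end

section
/- For γ > 0, define φ_γ : ℝ → ℝ by φ_γ(x) = max(0, 1-|x|)^γ. Then there is a constant c(γ) > 0 such that the Fourier transform satisfies |φ̂_γ(x)| ≤ c(γ) (1+|x|)^{-min(1,γ)-1} for all x ∈ ℝ. -/
open MeasureTheory

namespace RKFD

open intervalIntegral Set

noncomputable def ee (ξ y : ℝ) : ℂ := Complex.exp (-Complex.I * ξ * y)

lemma norm_ee (ξ y : ℝ) : ‖ee ξ y‖ = 1 := by
  rw [ee, Complex.norm_exp]
  norm_num [Complex.mul_re]

lemma continuous_ee (ξ : ℝ) : Continuous (ee ξ) := by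
  unfold ee; fun_prop

lemma hasDerivAt_ee (ξ y : ℝ) : HasDerivAt (ee ξ) (-Complex.I * ξ * ee ξ y) y := by
  have h1 : HasDerivAt (fun y : ℝ => -Complex.I * ξ * (y : ℂ)) (-Complex.I * ξ) y := by
    simpa using (Complex.ofRealCLM.hasDerivAt (x := y)).const_mul (-Complex.I * (ξ : ℂ))
  have h2 := h1.cexp
  rw [show ee ξ = fun y : ℝ => Complex.exp (-Complex.I * ξ * y) from rfl]
  convert h2 using 1
  ring

noncomputable def vv (ξ y : ℝ) : ℂ := ee ξ y / (-Complex.I * ξ)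

lemma Ixi_ne (ξ : ℝ) (hξ : ξ ≠ 0) : (Complex.I * ξ) ≠ 0 := by
  simp [Complex.ext_iff, hξ, Complex.I_ne_zero]

lemma hasDerivAt_vv (ξ : ℝ) (hξ : ξ ≠ 0) (y : ℝ) : HasDerivAt (vv ξ) (ee ξ y) y := by
  have hne : (-Complex.I * (ξ : ℂ)) ≠ 0 := by
    simpa [neg_mul] using neg_ne_zero.mpr (Ixi_ne ξ hξ)
  have h := (hasDerivAt_ee ξ y).div_const (-Complex.I * ξ)
  have e : (-Complex.I * (ξ : ℂ)) * ee ξ y / (-Complex.I * ξ) = ee ξ y :=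
    mul_div_cancel_left₀ _ hne
  rw [show vv ξ = fun y => ee ξ y / (-Complex.I * ξ) from rfl]
  rw [show (-Complex.I * (ξ:ℂ) * ee ξ y) = (-Complex.I * (ξ:ℂ)) * ee ξ y from rfl] at h
  exact e ▸ h

lemma norm_vv (ξ : ℝ) (y : ℝ) : ‖vv ξ y‖ = |ξ|⁻¹ := by
  rw [vv, norm_div, norm_ee]
  simp

lemma hasDerivAt_onem (p : ℝ) {y : ℝ} (hy : y < 1) :
    HasDerivAt (fun x : ℝ => (1 - x) ^ p) (-(p * (1 - y) ^ (p - 1))) y := by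
  have h := Real.hasDerivAt_rpow_const (x := 1 - y) (p := p) (Or.inl (by linarith))
  have h2 : HasDerivAt (fun x : ℝ => 1 - x) (-1) y := by
    simpa using (hasDerivAt_id y).const_sub 1
  have := h.comp y h2
  simpa using h2.rpow_const (p := p) (Or.inl (by linarith))

lemma hasDerivAt_onemC (p : ℝ) {y : ℝ} (hy : y < 1) :
    HasDerivAt (fun x : ℝ => (((1 - x) ^ p : ℝ) : ℂ)) (((-(p * (1 - y) ^ (p - 1)) : ℝ)) : ℂ) y :=
  (hasDerivAt_onem p hy).ofReal_comp

lemma contOn_onem (p : ℝ) {s : Set ℝ} (hs : ∀ x ∈ s, x < 1) :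
    ContinuousOn (fun x : ℝ => (1 - x) ^ p) s := by
  intro x hx
  have hne : (1 : ℝ) - x ≠ 0 := by have := hs x hx; intro h; linarith [sub_eq_zero.mp h]
  exact ((Real.continuousAt_rpow_const _ _ (Or.inl hne)).comp
    ((continuous_const.sub continuous_id).continuousAt)).continuousWithinAt

lemma continuous_onem (p : ℝ) (hp : 0 ≤ p) : Continuous (fun x : ℝ => (1 - x) ^ p) :=
  (continuous_const.sub continuous_id).rpow_const (fun _ => Or.inr hp)

lemma int_onem (p : ℝ) (a b : ℝ) (h : -1 < p ∨ (p ≠ -1 ∧ a < 1 ∧ b < 1)) :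
    ∫ y in a..b, (1 - y) ^ p = ((1 - a) ^ (p + 1) - (1 - b) ^ (p + 1)) / (p + 1) := by
  rw [show (fun y : ℝ => (1 - y) ^ p) = fun y : ℝ => (fun t : ℝ => t ^ p) (1 - y) from rfl,
    intervalIntegral.integral_comp_sub_left (fun t : ℝ => t ^ p) 1]
  rcases h with hp | ⟨hp, ha, hb⟩
  · rw [integral_rpow (Or.inl hp)]
  · rw [integral_rpow (Or.inr ⟨hp, Set.notMem_uIcc_of_lt (by linarith) (by linarith)⟩)]

noncomputable def J (γ ξ : ℝ) : ℂ := ∫ y in (0:ℝ)..1, (((1 - y) ^ γ : ℝ) : ℂ) * ee ξ y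

lemma norm_cast_mul_vv (r ξ x : ℝ) : ‖((r : ℝ) : ℂ) * vv ξ x‖ = |r| * |ξ|⁻¹ := by
  rw [norm_mul, norm_vv]
  simp

lemma norm_cast_mul_ee (r ξ x : ℝ) : ‖((r : ℝ) : ℂ) * ee ξ x‖ = |r| := by
  rw [norm_mul, norm_ee, mul_one]
  simp

lemma Jbound (γ : ℝ) (hγ : 0 < γ) (ξ : ℝ) (hξ : 1 ≤ |ξ|) :
    ‖J γ ξ - 1 / (Complex.I * ξ)‖ ≤ (2 + 4 * γ) * |ξ| ^ (-(min 1 γ) - 1) := by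
  have hs0 : (0:ℝ) < |ξ| := by linarith
  have hξ0 : ξ ≠ 0 := by simpa using hs0.ne'
  have hne := Ixi_ne ξ hξ0
  have hne2 : (-Complex.I * (ξ : ℂ)) ≠ 0 := by
    simpa [neg_mul] using neg_ne_zero.mpr hne
  set s : ℝ := |ξ| with hs
  set b : ℝ := 1 - s⁻¹ with hbdef
  have hsinv0 : 0 < s⁻¹ := by positivity
  have hsinv1 : s⁻¹ ≤ 1 := inv_le_one_of_one_le₀ hξ
  have hb0 : 0 ≤ b := by rw [hbdef]; linarith
  have hb1 : b < 1 := by rw [hbdef]; linarith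
  have h1b : 1 - b = s⁻¹ := by rw [hbdef]; ring
  set m : ℝ := min 1 γ with hm
  have hm1 : m ≤ 1 := min_le_left _ _
  have hmγ : m ≤ γ := min_le_right _ _
  -- rpow bookkeeping
  have key : ∀ t : ℝ, m + 1 ≤ t → s ^ (-t) ≤ s ^ (-m - 1) := fun t ht =>
    Real.rpow_le_rpow_of_exponent_le hξ (by linarith)
  have einv : ∀ t : ℝ, (s⁻¹) ^ t = s ^ (-t) := fun t => by
    rw [Real.inv_rpow hs0.le, ← Real.rpow_neg hs0.le]
  have einv1 : s⁻¹ = s ^ (-(1:ℝ)) := by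
    rw [← Real.rpow_one s⁻¹, einv]
  set P : ℝ := s ^ (-m - 1) with hP
  have hPpos : 0 < P := Real.rpow_pos_of_pos hs0 _
  have hA : (s⁻¹) ^ γ * s⁻¹ ≤ P := by
    rw [einv γ, einv1, ← Real.rpow_add hs0, show -γ + -(1:ℝ) = -(γ+1) from by ring]
    exact key (γ+1) (by linarith)
  have h2 : s⁻¹ * s⁻¹ ≤ P := by
    nth_rewrite 1 [einv1]
    rw [einv1, ← Real.rpow_add hs0, show -(1:ℝ) + -1 = -(2:ℝ) from by norm_num]
    exact key 2 (by linarith)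
  have hg1 : (s⁻¹) ^ (γ-1) * s⁻¹ * s⁻¹ ≤ P := by
    rw [einv (γ-1), einv1, ← Real.rpow_add hs0, ← Real.rpow_add hs0,
      show -(γ-1) + -(1:ℝ) + -1 = -(γ+1) from by ring]
    exact key (γ+1) (by linarith)
  -- splitting
  have hcont : Continuous (fun y : ℝ => (((1 - y) ^ γ : ℝ) : ℂ) * ee ξ y) :=
    (Complex.continuous_ofReal.comp (continuous_onem γ hγ.le)).mul (continuous_ee ξ)
  have hsplit : J γ ξ = (∫ y in (0:ℝ)..b, (((1 - y) ^ γ : ℝ) : ℂ) * ee ξ y)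
      + ∫ y in b..1, (((1 - y) ^ γ : ℝ) : ℂ) * ee ξ y :=
    (integral_add_adjacent_intervals (hcont.intervalIntegrable _ _)
      (hcont.intervalIntegrable _ _)).symm
  have huIcc : Set.uIcc (0:ℝ) b = Set.Icc 0 b := Set.uIcc_of_le hb0
  have hlt1 : ∀ x ∈ Set.uIcc (0:ℝ) b, x < 1 := by
    intro x hx; rw [huIcc] at hx; exact lt_of_le_of_lt hx.2 hb1
  -- first integration by parts
  have hu : ∀ x ∈ Set.uIcc (0:ℝ) b, HasDerivAt (fun x : ℝ => (((1 - x) ^ γ : ℝ) : ℂ))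
      (((-(γ * (1 - x) ^ (γ - 1)) : ℝ)) : ℂ) x :=
    fun x hx => hasDerivAt_onemC γ (hlt1 x hx)
  have hv : ∀ x ∈ Set.uIcc (0:ℝ) b, HasDerivAt (vv ξ) (ee ξ x) x :=
    fun x _ => hasDerivAt_vv ξ hξ0 x
  have hu'int : IntervalIntegrable (fun x : ℝ => (((-(γ * (1 - x) ^ (γ - 1)) : ℝ)) : ℂ))
      volume 0 b := by
    apply ContinuousOn.intervalIntegrable
    exact Complex.continuous_ofReal.comp_continuousOn
      ((continuousOn_const.mul (contOn_onem (γ-1) hlt1)).neg)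
  have hv'int : IntervalIntegrable (ee ξ) volume 0 b := (continuous_ee ξ).intervalIntegrable _ _
  have H1 := intervalIntegral.integral_mul_deriv_eq_deriv_mul hu hv hu'int hv'int
  have hu0v0 : (((1 - (0:ℝ)) ^ γ : ℝ) : ℂ) * vv ξ 0 = -(1 / (Complex.I * ξ)) := by
    simp [vv, ee, Real.one_rpow, neg_mul, div_neg]
  set L : ℂ := ∫ x in (0:ℝ)..b, (((1 - x) ^ (γ-1) : ℝ) : ℂ) * ee ξ x with hL
  have hT3 : (∫ x in (0:ℝ)..b, (((-(γ * (1 - x) ^ (γ - 1)) : ℝ)) : ℂ) * vv ξ x)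
      = ((γ : ℂ) / (Complex.I * ξ)) * L := by
    rw [hL, ← intervalIntegral.integral_const_mul]
    apply intervalIntegral.integral_congr
    intro x hx
    simp only [vv]
    push_cast
    field_simp
  have hdecomp : J γ ξ - 1 / (Complex.I * ξ) =
      ((((1 - b) ^ γ : ℝ) : ℂ) * vv ξ b
      + ∫ y in b..1, (((1 - y) ^ γ : ℝ) : ℂ) * ee ξ y)
      - ((γ : ℂ) / (Complex.I * ξ)) * L := by
    rw [hsplit, H1, hu0v0, hT3]; ring
  -- second integration by parts
  have hu2 : ∀ x ∈ Set.uIcc (0:ℝ) b, HasDerivAt (fun x : ℝ => (((1 - x) ^ (γ-1) : ℝ) : ℂ))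
      (((-((γ-1) * (1 - x) ^ (γ - 1 - 1)) : ℝ)) : ℂ) x :=
    fun x hx => hasDerivAt_onemC (γ-1) (hlt1 x hx)
  have hu2'int : IntervalIntegrable (fun x : ℝ => (((-((γ-1) * (1 - x) ^ (γ - 1 - 1)) : ℝ)) : ℂ))
      volume 0 b := by
    apply ContinuousOn.intervalIntegrable
    exact Complex.continuous_ofReal.comp_continuousOn
      ((continuousOn_const.mul (contOn_onem (γ-1-1) hlt1)).neg)
  have H2 := intervalIntegral.integral_mul_deriv_eq_deriv_mul hu2 hv hu2'int hv'int
  -- bound the error integral in the second IBP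
  have hT5 : ‖∫ x in (0:ℝ)..b, (((-((γ-1) * (1 - x) ^ (γ - 1 - 1)) : ℝ)) : ℂ) * vv ξ x‖
      ≤ (1 + (s⁻¹) ^ (γ-1)) * s⁻¹ := by
    have hgint : IntervalIntegrable (fun x : ℝ => (|γ-1| * s⁻¹) * (1 - x) ^ (γ - 1 - 1))
        volume 0 b :=
      (continuousOn_const.mul (contOn_onem (γ-1-1) hlt1)).intervalIntegrable
    have hab := intervalIntegral.norm_integral_le_abs_of_norm_le (μ := volume)
      (f := fun x : ℝ => (((-((γ-1) * (1 - x) ^ (γ - 1 - 1)) : ℝ)) : ℂ) * vv ξ x)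
      (g := fun x : ℝ => (|γ-1| * s⁻¹) * (1 - x) ^ (γ - 1 - 1)) (a := 0) (b := b) ?_ hgint
    · refine hab.trans ?_
      rcases eq_or_ne γ 1 with h1 | h1
      · subst h1
        simp only [sub_self, abs_zero, zero_mul, intervalIntegral.integral_zero, abs_zero]
        positivity
      · rw [intervalIntegral.integral_const_mul,
          int_onem (γ-1-1) 0 b (Or.inr ⟨by intro h; apply h1; linarith, by norm_num, hb1⟩),
          show γ - 1 - 1 + 1 = γ - 1 from by ring]
        have h10 : (1 : ℝ) - 0 = 1 := by norm_num
        rw [h10, Real.one_rpow, h1b]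
        have ht0 : (0:ℝ) ≤ (s⁻¹) ^ (γ-1) := Real.rpow_nonneg hsinv0.le _
        have hγ1 : |γ - 1| ≠ 0 := by simpa [sub_eq_zero] using h1
        rw [abs_mul, abs_mul, abs_div, abs_of_nonneg (abs_nonneg (γ-1)),
          abs_of_nonneg hsinv0.le]
        rw [show |γ-1| * s⁻¹ * (|1 - (s⁻¹) ^ (γ-1)| / |γ-1|)
            = s⁻¹ * |1 - (s⁻¹) ^ (γ-1)| from by field_simp]
        have habs : |1 - (s⁻¹) ^ (γ-1)| ≤ 1 + (s⁻¹) ^ (γ-1) := by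
          rw [abs_le]; constructor <;> nlinarith
        calc s⁻¹ * |1 - (s⁻¹) ^ (γ-1)| ≤ s⁻¹ * (1 + (s⁻¹) ^ (γ-1)) := by
              exact mul_le_mul_of_nonneg_left habs hsinv0.le
          _ = (1 + (s⁻¹) ^ (γ-1)) * s⁻¹ := by ring
    · filter_upwards [ae_restrict_mem measurableSet_uIoc] with t ht
      rw [Set.uIoc_of_le hb0] at ht
      have htb : t < 1 := lt_of_le_of_lt ht.2 hb1
      rw [norm_cast_mul_vv]
      rw [abs_neg, abs_mul, abs_of_nonneg (Real.rpow_nonneg (by linarith) _)]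
      exact le_of_eq (by ring)
  -- bound on L
  have hLb : ‖L‖ ≤ (2 + 2 * (s⁻¹) ^ (γ-1)) * s⁻¹ := by
    rw [hL, H2]
    have e1 : ‖(((1 - b) ^ (γ-1) : ℝ) : ℂ) * vv ξ b‖ = (s⁻¹) ^ (γ-1) * s⁻¹ := by
      rw [norm_cast_mul_vv, abs_of_nonneg (Real.rpow_nonneg (by linarith) _), h1b]
    have e2 : ‖(((1 - (0:ℝ)) ^ (γ-1) : ℝ) : ℂ) * vv ξ 0‖ = s⁻¹ := by
      rw [norm_cast_mul_vv]
      norm_num [Real.one_rpow, hs]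
    calc ‖(((1 - b) ^ (γ-1) : ℝ) : ℂ) * vv ξ b - (((1 - (0:ℝ)) ^ (γ-1) : ℝ) : ℂ) * vv ξ 0
          - ∫ x in (0:ℝ)..b, (((-((γ-1) * (1 - x) ^ (γ - 1 - 1)) : ℝ)) : ℂ) * vv ξ x‖
        ≤ ‖(((1 - b) ^ (γ-1) : ℝ) : ℂ) * vv ξ b - (((1 - (0:ℝ)) ^ (γ-1) : ℝ) : ℂ) * vv ξ 0‖
          + ‖∫ x in (0:ℝ)..b, (((-((γ-1) * (1 - x) ^ (γ - 1 - 1)) : ℝ)) : ℂ) * vv ξ x‖ :=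
          norm_sub_le _ _
      _ ≤ (‖(((1 - b) ^ (γ-1) : ℝ) : ℂ) * vv ξ b‖ + ‖(((1 - (0:ℝ)) ^ (γ-1) : ℝ) : ℂ) * vv ξ 0‖)
          + ((1 + (s⁻¹) ^ (γ-1)) * s⁻¹) := add_le_add (norm_sub_le _ _) hT5
      _ = ((s⁻¹) ^ (γ-1) * s⁻¹ + s⁻¹) + ((1 + (s⁻¹) ^ (γ-1)) * s⁻¹) := by rw [e1, e2]
      _ = (2 + 2 * (s⁻¹) ^ (γ-1)) * s⁻¹ := by ring
  -- bound on the tail integral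
  have hY : ‖∫ y in b..1, (((1 - y) ^ γ : ℝ) : ℂ) * ee ξ y‖ ≤ (s⁻¹) ^ (γ+1) / (γ+1) := by
    have hgint : IntervalIntegrable (fun y : ℝ => (1 - y) ^ γ) volume b 1 :=
      (continuous_onem γ hγ.le).intervalIntegrable _ _
    have hab := intervalIntegral.norm_integral_le_abs_of_norm_le (μ := volume)
      (f := fun y : ℝ => (((1 - y) ^ γ : ℝ) : ℂ) * ee ξ y)
      (g := fun y : ℝ => (1 - y) ^ γ) (a := b) (b := 1) ?_ hgint
    · refine hab.trans ?_
      rw [int_onem γ b 1 (Or.inl (by linarith)), sub_self,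
        Real.zero_rpow (by linarith : (0:ℝ) < γ + 1).ne', sub_zero, h1b]
      rw [abs_of_nonneg (by positivity)]
    · filter_upwards [ae_restrict_mem measurableSet_uIoc] with t ht
      rw [Set.uIoc_of_le hb1.le] at ht
      rw [norm_cast_mul_ee]
      exact le_of_eq (abs_of_nonneg (Real.rpow_nonneg (by linarith [ht.2]) _))
  -- assemble
  have hX : ‖(((1 - b) ^ γ : ℝ) : ℂ) * vv ξ b‖ = (s⁻¹) ^ γ * s⁻¹ := by
    rw [norm_cast_mul_vv, abs_of_nonneg (Real.rpow_nonneg (by linarith) _), h1b]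
  have hZ : ‖((γ : ℂ) / (Complex.I * ξ)) * L‖ ≤ (γ * s⁻¹) * ((2 + 2 * (s⁻¹) ^ (γ-1)) * s⁻¹) := by
    rw [norm_mul, norm_div]
    have eγ : ‖(γ : ℂ)‖ = γ := by
      simp [abs_of_pos hγ]
    have eIξ : ‖Complex.I * (ξ:ℂ)‖ = s := by
      simp [hs]
    rw [eγ, eIξ, div_eq_mul_inv]
    exact mul_le_mul_of_nonneg_left hLb (by positivity)
  have hBb : (s⁻¹) ^ (γ+1) / (γ+1) ≤ P := by
    refine le_trans (div_le_self (Real.rpow_nonneg hsinv0.le _) (by linarith)) ?_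
    rw [einv]
    exact key (γ+1) (by linarith)
  have hZb : (γ * s⁻¹) * ((2 + 2 * (s⁻¹) ^ (γ-1)) * s⁻¹) ≤ 4 * γ * P := by
    have e : (γ * s⁻¹) * ((2 + 2 * (s⁻¹) ^ (γ-1)) * s⁻¹)
        = 2*γ*(s⁻¹*s⁻¹) + 2*γ*((s⁻¹) ^ (γ-1) * s⁻¹ * s⁻¹) := by ring
    rw [e]
    have c1 := mul_le_mul_of_nonneg_left h2 (by positivity : (0:ℝ) ≤ 2*γ)
    have c2 := mul_le_mul_of_nonneg_left hg1 (by positivity : (0:ℝ) ≤ 2*γ)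
    linarith
  calc ‖J γ ξ - 1 / (Complex.I * ξ)‖
      = ‖((((1 - b) ^ γ : ℝ) : ℂ) * vv ξ b
        + ∫ y in b..1, (((1 - y) ^ γ : ℝ) : ℂ) * ee ξ y)
        - ((γ : ℂ) / (Complex.I * ξ)) * L‖ := by rw [hdecomp]
    _ ≤ ‖(((1 - b) ^ γ : ℝ) : ℂ) * vv ξ b
        + ∫ y in b..1, (((1 - y) ^ γ : ℝ) : ℂ) * ee ξ y‖
        + ‖((γ : ℂ) / (Complex.I * ξ)) * L‖ := norm_sub_le _ _
    _ ≤ (‖(((1 - b) ^ γ : ℝ) : ℂ) * vv ξ b‖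
        + ‖∫ y in b..1, (((1 - y) ^ γ : ℝ) : ℂ) * ee ξ y‖)
        + ‖((γ : ℂ) / (Complex.I * ξ)) * L‖ :=
          add_le_add_left (norm_add_le _ _) _
    _ ≤ ((s⁻¹) ^ γ * s⁻¹ + (s⁻¹) ^ (γ+1) / (γ+1))
        + (γ * s⁻¹) * ((2 + 2 * (s⁻¹) ^ (γ-1)) * s⁻¹) := by
          exact add_le_add (add_le_add (le_of_eq hX) hY) hZ
    _ ≤ P + P + 4 * γ * P := by
          exact add_le_add (add_le_add hA hBb) hZb
    _ ≤ (2 + 4 * γ) * P := by linarith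

end RKFD

/-- For `γ > 0` and `φ_γ(x) = max(0, 1-|x|)^γ`, there is `c(γ) > 0` with
`|φ̂_γ(x)| ≤ c(γ) (1+|x|)^{-min(1,γ)-1}` for all `x`. -/
theorem riesz_kernel_fourier_decay (γ : ℝ) (hγ : 0 < γ) :
    ∃ c : ℝ, 0 < c ∧ ∀ x : ℝ,
      ‖FT (fun y : ℝ => ((max 0 (1 - |y|) ^ γ : ℝ) : ℂ)) x‖ ≤
        c * (1 + |x|) ^ (-(min 1 γ) - 1) := by
  refine ⟨16 + 32 * γ, by positivity, fun ξ => ?_⟩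
  have hm1 : min 1 γ ≤ 1 := min_le_left _ _
  have hmγ : min 1 γ ≤ γ := min_le_right _ _
  have hm0 : 0 < min 1 γ := lt_min one_pos hγ
  set g : ℝ → ℂ := fun y => ((max 0 (1 - |y|) ^ γ : ℝ) : ℂ) * RKFD.ee ξ y with hg
  have hFT : FT (fun y : ℝ => ((max 0 (1 - |y|) ^ γ : ℝ) : ℂ)) ξ
      = (1 / (2 * (Real.pi : ℂ))) * ∫ y : ℝ, g y := rfl
  have hphc : Continuous (fun y : ℝ => max 0 (1 - |y|) ^ γ) :=
    (continuous_const.max (continuous_const.sub continuous_abs)).rpow_const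
      (fun _ => Or.inr hγ.le)
  have hgc : Continuous g := (Complex.continuous_ofReal.comp hphc).mul (RKFD.continuous_ee ξ)
  have hsupp : ∀ y : ℝ, y ∉ Set.Ioc (-1:ℝ) 1 → g y = 0 := by
    intro y hy
    rw [Set.mem_Ioc, not_and_or, not_lt, not_le] at hy
    have h1y : 1 ≤ |y| := by
      rw [le_abs]
      rcases hy with h | h
      · exact Or.inr (by linarith)
      · exact Or.inl (by linarith)
    have : max 0 (1 - |y|) = 0 := max_eq_left (by linarith)
    rw [hg]
    simp [this, Real.zero_rpow hγ.ne']
  have hred : (∫ y : ℝ, g y) = ∫ y in (-1:ℝ)..1, g y := by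
    rw [intervalIntegral.integral_of_le (by norm_num : (-1:ℝ) ≤ 1)]
    exact (setIntegral_eq_integral_of_forall_compl_eq_zero hsupp).symm
  have hsplit : (∫ y in (-1:ℝ)..1, g y) = RKFD.J γ (-ξ) + RKFD.J γ ξ := by
    rw [← intervalIntegral.integral_add_adjacent_intervals
      (hgc.intervalIntegrable (-1) 0) (hgc.intervalIntegrable 0 1)]
    congr 1
    · have hneg := intervalIntegral.integral_comp_neg (a := (0:ℝ)) (b := 1) (f := g)
      rw [neg_zero] at hneg
      rw [← hneg, RKFD.J]
      apply intervalIntegral.integral_congr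
      intro x hx
      rw [Set.uIcc_of_le (by norm_num : (0:ℝ) ≤ 1)] at hx
      simp only [hg]
      rw [abs_neg, abs_of_nonneg hx.1, max_eq_right (by linarith [hx.2])]
      congr 1
      unfold RKFD.ee
      congr 1
      push_cast
      ring
    · rw [RKFD.J]
      apply intervalIntegral.integral_congr
      intro x hx
      rw [Set.uIcc_of_le (by norm_num : (0:ℝ) ≤ 1)] at hx
      simp only [hg]
      rw [abs_of_nonneg hx.1, max_eq_right (by linarith [hx.2])]
  have hnorm_const : ‖(1 / (2 * (Real.pi : ℂ)))‖ ≤ 1 := by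
    rw [show (1 / (2 * (Real.pi : ℂ))) = (((1 / (2 * Real.pi) : ℝ)) : ℂ) by push_cast; ring]
    rw [Complex.norm_real, Real.norm_eq_abs,
      abs_of_nonneg (by positivity : (0:ℝ) ≤ 1 / (2 * Real.pi))]
    rw [div_le_one (by positivity)]
    nlinarith [Real.pi_gt_three]
  have h24 : (1:ℝ)/4 ≤ (2:ℝ) ^ (-(min 1 γ) - 1 : ℝ) := by
    have h1 : (2:ℝ) ^ (-(2:ℝ)) ≤ 2 ^ (-(min 1 γ) - 1 : ℝ) :=
      Real.rpow_le_rpow_of_exponent_le one_le_two (by linarith)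
    have h2 : (2:ℝ) ^ (-(2:ℝ)) = 1/4 := by
      rw [show (-(2:ℝ)) = ((-2 : ℤ) : ℝ) by norm_num, Real.rpow_intCast]
      norm_num
    exact h2 ▸ h1
  have hz0 : (-(min 1 γ) - 1 : ℝ) ≤ 0 := by linarith
  rcases le_or_gt 1 |ξ| with hbig | hsmall
  · -- large frequency
    have hJ1 := RKFD.Jbound γ hγ ξ hbig
    have hJ2 := RKFD.Jbound γ hγ (-ξ) (by rwa [abs_neg])
    rw [abs_neg] at hJ2
    have hcancel : RKFD.J γ (-ξ) + RKFD.J γ ξ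
        = (RKFD.J γ ξ - 1 / (Complex.I * ξ))
          + (RKFD.J γ (-ξ) - 1 / (Complex.I * ((-ξ : ℝ) : ℂ))) := by
      rw [show ((-ξ : ℝ) : ℂ) = -(ξ:ℂ) by push_cast; ring, mul_neg, div_neg]
      ring
    have hIb : ‖∫ y : ℝ, g y‖ ≤ (4 + 8*γ) * |ξ| ^ (-(min 1 γ) - 1) := by
      rw [hred, hsplit, hcancel]
      calc ‖(RKFD.J γ ξ - 1 / (Complex.I * ξ))
            + (RKFD.J γ (-ξ) - 1 / (Complex.I * ((-ξ : ℝ) : ℂ)))‖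
          ≤ ‖RKFD.J γ ξ - 1 / (Complex.I * ξ)‖
            + ‖RKFD.J γ (-ξ) - 1 / (Complex.I * ((-ξ : ℝ) : ℂ))‖ := norm_add_le _ _
        _ ≤ (2 + 4 * γ) * |ξ| ^ (-(min 1 γ) - 1) + (2 + 4 * γ) * |ξ| ^ (-(min 1 γ) - 1) :=
            add_le_add hJ1 hJ2
        _ = (4 + 8*γ) * |ξ| ^ (-(min 1 γ) - 1) := by ring
    have hcomp : |ξ| ^ (-(min 1 γ) - 1) ≤ 4 * (1+|ξ|) ^ (-(min 1 γ) - 1) := by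
      have h2s : 1 + |ξ| ≤ 2 * |ξ| := by linarith
      have hmono : (2*|ξ|) ^ (-(min 1 γ) - 1) ≤ (1+|ξ|) ^ (-(min 1 γ) - 1) :=
        Real.rpow_le_rpow_of_nonpos (by positivity) h2s hz0
      have hmul : (2*|ξ|) ^ (-(min 1 γ) - 1) = 2 ^ (-(min 1 γ) - 1 : ℝ) * |ξ| ^ (-(min 1 γ) - 1) :=
        Real.mul_rpow (by norm_num) (abs_nonneg ξ)
      have hQ0 : (0:ℝ) ≤ |ξ| ^ (-(min 1 γ) - 1) := Real.rpow_nonneg (abs_nonneg ξ) _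
      nlinarith [mul_le_mul_of_nonneg_right h24 hQ0]
    rw [hFT, norm_mul]
    calc ‖(1 / (2 * (Real.pi : ℂ)))‖ * ‖∫ y : ℝ, g y‖
        ≤ 1 * ((4 + 8*γ) * |ξ| ^ (-(min 1 γ) - 1)) :=
          mul_le_mul hnorm_const hIb (norm_nonneg _) zero_le_one
      _ = (4 + 8*γ) * |ξ| ^ (-(min 1 γ) - 1) := one_mul _
      _ ≤ (4 + 8*γ) * (4 * (1+|ξ|) ^ (-(min 1 γ) - 1)) :=
          mul_le_mul_of_nonneg_left hcomp (by positivity)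
      _ = (16 + 32 * γ) * (1+|ξ|) ^ (-(min 1 γ) - 1) := by ring
  · -- small frequency
    have hIb : ‖∫ y : ℝ, g y‖ ≤ 2 := by
      rw [hred]
      have hb := intervalIntegral.norm_integral_le_of_norm_le_const (C := 1) (f := g)
        (a := -1) (b := 1) ?_
      · calc ‖∫ y in (-1:ℝ)..1, g y‖ ≤ 1 * |1 - (-1:ℝ)| := hb
          _ = 2 := by norm_num
      · intro x _
        rw [hg]
        rw [RKFD.norm_cast_mul_ee]
        rw [abs_of_nonneg (Real.rpow_nonneg (le_max_left _ _) _)]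
        exact Real.rpow_le_one (le_max_left _ _)
          (max_le zero_le_one (by linarith [abs_nonneg x])) hγ.le
    have h2b : (2:ℝ) ^ (-(min 1 γ) - 1 : ℝ) ≤ (1+|ξ|) ^ (-(min 1 γ) - 1) :=
      Real.rpow_le_rpow_of_nonpos (by positivity) (by linarith) hz0
    have hP4 : (1:ℝ)/4 ≤ (1+|ξ|) ^ (-(min 1 γ) - 1) := le_trans h24 h2b
    rw [hFT, norm_mul]
    have h1 : ‖(1 / (2 * (Real.pi : ℂ)))‖ * ‖∫ y : ℝ, g y‖ ≤ 1 * 2 :=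
      mul_le_mul hnorm_const hIb (norm_nonneg _) zero_le_one
    have h3 := mul_le_mul_of_nonneg_left hP4 (by positivity : (0:ℝ) ≤ 16 + 32*γ)
    nlinarith
end

section
/- Suppose S = (σ_{kn})_{k,n≥0} is an infinite matrix which is a Schur multiplier on ℓ² (i.e., entrywise multiplication by S maps bounded operators on ℓ² to bounded operators on ℓ²), and suppose both iterated limits ℓ₁ = lim_k lim_n σ_{kn} and ℓ₂ = lim_n lim_k σ_{kn} exist. Then ℓ₁ = ℓ₂. -/
open scoped BigOperators

/-- `MatBound p A C` : the matrix `A` (row index first), acting on finitely supported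
sequences, is bounded on `ℓ^p` with norm at most `C`. -/
noncomputable def MatBound (p : ℝ) (A : ℕ → ℕ → ℂ) (C : ℝ) : Prop :=
  ∀ x : ℕ →₀ ℂ,
    Summable (fun n : ℕ => ‖∑ k ∈ x.support, A n k * x k‖ ^ p) ∧
    ∑' n : ℕ, ‖∑ k ∈ x.support, A n k * x k‖ ^ p ≤
      C ^ p * ∑ k ∈ x.support, ‖x k‖ ^ p

/-- The matrix `A` represents a bounded operator on `ℓ^p`. -/
noncomputable def IsBoundedOn (p : ℝ) (A : ℕ → ℕ → ℂ) : Prop :=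
  ∃ C : ℝ, 0 ≤ C ∧ MatBound p A C

/-- `S` is a Schur multiplier on `ℓ^p`. -/
noncomputable def IsSchurMult (p : ℝ) (S : ℕ → ℕ → ℂ) : Prop :=
  ∀ A : ℕ → ℕ → ℂ, IsBoundedOn p A → IsBoundedOn p (fun n k => S n k * A n k)

/-- A matrix is lower triangular if its entries vanish above the main diagonal. -/
def LowerTri (A : ℕ → ℕ → ℂ) : Prop := ∀ n k : ℕ, n < k → A n k = 0

/-- `S` is a Schur multiplier for lower triangular matrices on `ℓ^p`. -/
noncomputable def IsSchurMultLT (p : ℝ) (S : ℕ → ℕ → ℂ) : Prop :=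
  ∀ A : ℕ → ℕ → ℂ, LowerTri A → IsBoundedOn p A →
    IsBoundedOn p (fun n k => S n k * A n k)


open Filter
open Complex intervalIntegral

noncomputable section

private lemma hasDerivAt_cexp_mul (c : ℂ) (θ : ℝ) :
    HasDerivAt (fun t : ℝ => Complex.exp (c * t)) (Complex.exp (c * θ) * c) θ := by
  have h1 : HasDerivAt (fun t : ℝ => (c * t : ℂ)) c θ := by
    simpa using (Complex.ofRealCLM.hasDerivAt (x := θ)).const_mul c
  simpa using h1.cexp

private lemma integral_exp_int (m : ℤ) :
    (∫ θ in (0:ℝ)..(2*Real.pi), Complex.exp ((m:ℂ) * Complex.I * θ)) =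
      if m = 0 then (2*Real.pi : ℂ) else 0 := by
  rcases eq_or_ne m 0 with hm | hm
  · simp [hm, Complex.exp_zero]
  · have hc : (m:ℂ) * Complex.I ≠ 0 := by
      simp [Complex.I_ne_zero, Int.cast_ne_zero, hm]
    have key : ∀ θ ∈ Set.uIcc (0:ℝ) (2*Real.pi),
        HasDerivAt (fun t : ℝ => ((m:ℂ)*Complex.I)⁻¹ * Complex.exp ((m:ℂ)*Complex.I*t))
          (Complex.exp ((m:ℂ)*Complex.I*θ)) θ := by
      intro θ _
      have h := (hasDerivAt_cexp_mul ((m:ℂ)*Complex.I) θ).const_mul (((m:ℂ)*Complex.I)⁻¹)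
      have heq : ((m:ℂ)*Complex.I)⁻¹ * (Complex.exp ((m:ℂ)*Complex.I*θ) * ((m:ℂ)*Complex.I))
          = Complex.exp ((m:ℂ)*Complex.I*θ) := by
        field_simp
      rwa [heq] at h
    rw [intervalIntegral.integral_eq_sub_of_hasDerivAt key (by
      apply Continuous.intervalIntegrable; fun_prop)]
    have h2 : Complex.exp ((m:ℂ)*Complex.I*(2*(Real.pi:ℂ))) = 1 := by
      have := Complex.exp_int_mul_two_pi_mul_I m
      rw [← this]
      ring_nf
    rw [if_neg hm]
    push_cast
    rw [h2]
    simp [Complex.exp_zero]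

private lemma integral_weight (m : ℤ) :
    (∫ θ in (0:ℝ)..(2*Real.pi),
        Complex.I * ((Real.pi:ℂ) - θ) * Complex.exp ((-m:ℂ) * Complex.I * θ)) =
      2*(Real.pi:ℂ) * ((m:ℂ))⁻¹ := by
  rcases eq_or_ne m 0 with hm | hm
  · subst hm
    simp only [Int.cast_zero, neg_zero, zero_mul, Complex.exp_zero, mul_one, inv_zero, mul_zero]
    have h : (∫ θ in (0:ℝ)..(2*Real.pi), Complex.I * ((Real.pi:ℂ) - θ))
        = Complex.I * ((Real.pi:ℂ) * (2*Real.pi) - ((2*Real.pi)^2/2 : ℝ)) := by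
      rw [intervalIntegral.integral_const_mul]
      rw [intervalIntegral.integral_sub (by apply Continuous.intervalIntegrable; fun_prop)
        (by apply Continuous.intervalIntegrable; fun_prop)]
      rw [intervalIntegral.integral_const]
      have hid : (∫ θ in (0:ℝ)..(2*Real.pi), ((θ:ℂ))) = (((2*Real.pi)^2/2 : ℝ) : ℂ) := by
        rw [intervalIntegral.integral_ofReal]
        rw [integral_id]
        push_cast
        ring
      rw [hid]
      rw [Complex.real_smul]
      push_cast
      ring
    rw [h]
    push_cast
    ring
  · have hmc : (m:ℂ) ≠ 0 := Int.cast_ne_zero.mpr hm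
    set c : ℂ := (-m:ℂ) * Complex.I with hcdef
    have hc : c ≠ 0 := by
      simp [hcdef, Complex.I_ne_zero, hmc]
    set b : ℂ := ((m:ℂ))⁻¹ with hbdef
    set a : ℂ := (Complex.I * (Real.pi:ℂ) - b) / c with hadef
    have key : ∀ θ ∈ Set.uIcc (0:ℝ) (2*Real.pi),
        HasDerivAt (fun t : ℝ => Complex.exp (c * t) * (a + b * t))
          (Complex.I * ((Real.pi:ℂ) - θ) * Complex.exp ((-m:ℂ) * Complex.I * θ)) θ := by
      intro θ _
      have h1 : HasDerivAt (fun t : ℝ => (a + b * t : ℂ)) b θ := by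
        simpa using ((Complex.ofRealCLM.hasDerivAt (x := θ)).const_mul b).const_add a
      have h2 := (hasDerivAt_cexp_mul c θ).mul h1
      refine h2.congr_deriv ?_
      symm
      rw [← hcdef]
      have hcb : c * b = -Complex.I := by
        rw [hcdef, hbdef]
        field_simp
      have hca : c * a = Complex.I * (Real.pi:ℂ) - b := by
        rw [hadef]; field_simp
      calc Complex.I * ((Real.pi:ℂ) - θ) * Complex.exp (c * θ)
          = Complex.exp (c * θ) * ((c * a + b) + (c * b) * θ) := by
            rw [hca, hcb]; ring
        _ = Complex.exp (c * θ) * c * (a + b * θ) + Complex.exp (c * θ) * b := by ring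
    rw [intervalIntegral.integral_eq_sub_of_hasDerivAt key (by
      apply Continuous.intervalIntegrable; fun_prop)]
    have h2 : Complex.exp (c * (2*(Real.pi:ℂ))) = 1 := by
      have := Complex.exp_int_mul_two_pi_mul_I (-m)
      rw [← this]
      rw [hcdef]
      push_cast
      ring_nf
    push_cast
    rw [h2]
    simp only [Complex.ofReal_zero, mul_zero, Complex.exp_zero, one_mul, mul_one]
    ring

private lemma parseval_aux (G : Finset ℕ) (z : ℕ → ℂ) (ε : ℂ) (hε : ε = 1 ∨ ε = -1) :
    (∫ θ in (0:ℝ)..(2*Real.pi),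
        ((∑ i ∈ G, z i * Complex.exp ((ε * i) * Complex.I * θ)) *
          (starRingEnd ℂ) (∑ i ∈ G, z i * Complex.exp ((ε * i) * Complex.I * θ)))) =
      2*(Real.pi:ℂ) * ∑ i ∈ G, z i * (starRingEnd ℂ) (z i) := by
  have hconj : ∀ (i : ℕ) (θ : ℝ), (starRingEnd ℂ) (z i * Complex.exp ((ε * i) * Complex.I * θ))
      = (starRingEnd ℂ) (z i) * Complex.exp ((-ε * i) * Complex.I * θ) := by
    intro i θ
    rw [map_mul, ← Complex.exp_conj]
    congr 2
    simp only [map_mul, Complex.conj_I, Complex.conj_ofReal, map_natCast]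
    rcases hε with h | h <;> simp [h] <;> ring
  have hpt : ∀ θ : ℝ,
      ((∑ i ∈ G, z i * Complex.exp ((ε * i) * Complex.I * θ)) *
        (starRingEnd ℂ) (∑ i ∈ G, z i * Complex.exp ((ε * i) * Complex.I * θ)))
      = ∑ i ∈ G, ∑ i' ∈ G, (z i * (starRingEnd ℂ) (z i')) *
          Complex.exp ((ε * ((i:ℤ) - (i':ℤ)) : ℂ) * Complex.I * θ) := by
    intro θ
    rw [map_sum, Finset.sum_mul_sum]
    refine Finset.sum_congr rfl fun i _ => Finset.sum_congr rfl fun i' _ => ?_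
    rw [hconj]
    have hee : Complex.exp (ε * (i:ℂ) * Complex.I * (θ:ℂ)) * Complex.exp (-ε * (i':ℂ) * Complex.I * (θ:ℂ))
        = Complex.exp ((ε * ((i:ℤ) - (i':ℤ)) : ℂ) * Complex.I * (θ:ℂ)) := by
      rw [← Complex.exp_add]; congr 1; push_cast; ring
    rw [← hee]
    ring
  rw [intervalIntegral.integral_congr (g := fun θ => ∑ i ∈ G, ∑ i' ∈ G,
      (z i * (starRingEnd ℂ) (z i')) * Complex.exp ((ε * ((i:ℤ) - (i':ℤ)) : ℂ) * Complex.I * θ))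
      (fun θ _ => hpt θ)]
  rw [intervalIntegral.integral_finset_sum (fun i _ => by
    apply Continuous.intervalIntegrable
    apply continuous_finset_sum
    intro i' _
    fun_prop)]
  have hinner : ∀ i ∈ G, (∫ θ in (0:ℝ)..(2*Real.pi), ∑ i' ∈ G,
      (z i * (starRingEnd ℂ) (z i')) * Complex.exp ((ε * ((i:ℤ) - (i':ℤ)) : ℂ) * Complex.I * θ))
      = 2*(Real.pi:ℂ) * (z i * (starRingEnd ℂ) (z i)) := by
    intro i hi
    rw [intervalIntegral.integral_finset_sum (fun i' _ => by
      apply Continuous.intervalIntegrable; fun_prop)]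
    have hterm : ∀ i' ∈ G, (∫ θ in (0:ℝ)..(2*Real.pi),
        (z i * (starRingEnd ℂ) (z i')) * Complex.exp ((ε * ((i:ℤ) - (i':ℤ)) : ℂ) * Complex.I * θ))
        = if i' = i then 2*(Real.pi:ℂ) * (z i * (starRingEnd ℂ) (z i)) else 0 := by
      intro i' _
      rw [intervalIntegral.integral_const_mul]
      obtain ⟨M, hM1, hM2⟩ : ∃ M : ℤ, ((ε * ((i:ℤ) - (i':ℤ)) : ℂ) = (M:ℂ) * Complex.I * 1 / Complex.I) ∧ (M = 0 ↔ i' = i) := by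
        rcases hε with h | h
        · refine ⟨(i:ℤ) - i', by rw [h]; field_simp; push_cast; ring, by omega⟩
        · refine ⟨(i':ℤ) - i, by rw [h]; field_simp <;> push_cast <;> ring_nf, by omega⟩
      have hM1' : ((ε * ((i:ℤ) - (i':ℤ)) : ℂ)) = (M:ℂ) := by
        rw [hM1]; field_simp
      rw [hM1', integral_exp_int]
      by_cases h : i' = i
      · rw [if_pos (hM2.mpr h), if_pos h, h]; ring
      · rw [if_neg (fun hh => h (hM2.mp hh)), if_neg h]; ring
    rw [Finset.sum_congr rfl hterm]
    rw [Finset.sum_ite_eq' G i (fun _ => 2*(Real.pi:ℂ) * (z i * (starRingEnd ℂ) (z i)))]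
    rw [if_pos hi]
  rw [Finset.sum_congr rfl hinner, ← Finset.mul_sum]

end

noncomputable section

private lemma norm_sq_eq_conj_mul (z : ℂ) : ((‖z‖:ℂ))^2 = (starRingEnd ℂ) z * z := by
  rw [mul_comm, Complex.mul_conj, ← Complex.ofReal_pow, Complex.normSq_eq_norm_sq]

private lemma hilbert_rows (G J : Finset ℕ) (y : ℕ → ℂ) :
    ∑ i ∈ G, ‖∑ j ∈ J, ((i:ℂ) - (j:ℂ))⁻¹ * y j‖^2 ≤
      Real.pi^2 * ∑ j ∈ J, ‖y j‖^2 := by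
  have hπ : (0:ℝ) < Real.pi := Real.pi_pos
  set r : ℕ → ℂ := fun i => ∑ j ∈ J, ((i:ℂ) - (j:ℂ))⁻¹ * y j with hrdef
  set B : ℝ := ∑ i ∈ G, ‖r i‖^2 with hBdef
  set By : ℝ := ∑ j ∈ J, ‖y j‖^2 with hBydef
  have hBnn : 0 ≤ B := Finset.sum_nonneg fun i _ => sq_nonneg _
  have hBynn : 0 ≤ By := Finset.sum_nonneg fun j _ => sq_nonneg _
  set W : ℝ → ℂ := fun θ => ∑ i ∈ G,
      (starRingEnd ℂ) (r i) * Complex.exp (((-1 : ℂ) * i) * Complex.I * θ) with hWdef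
  set Y : ℝ → ℂ := fun θ => ∑ j ∈ J,
      y j * Complex.exp (((1 : ℂ) * j) * Complex.I * θ) with hYdef
  have hWc : Continuous W := continuous_finset_sum _ (fun i _ => by fun_prop)
  have hYc : Continuous Y := continuous_finset_sum _ (fun j _ => by fun_prop)
  -- step 1 : B as a double sum
  have hB1 : (B:ℂ) = ∑ i ∈ G, (starRingEnd ℂ) (r i) * r i := by
    rw [hBdef]
    push_cast
    exact Finset.sum_congr rfl fun i _ => norm_sq_eq_conj_mul (r i)
  -- the inverse as an integral
  have hinv : ∀ i j : ℕ, ((i:ℂ) - (j:ℂ))⁻¹ =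
      (2*(Real.pi:ℂ))⁻¹ * ∫ θ in (0:ℝ)..(2*Real.pi),
        Complex.I * ((Real.pi:ℂ) - θ) *
          (Complex.exp (((-1:ℂ) * i) * Complex.I * θ) * Complex.exp (((1:ℂ) * j) * Complex.I * θ)) := by
    intro i j
    have hcongr : (∫ θ in (0:ℝ)..(2*Real.pi),
        Complex.I * ((Real.pi:ℂ) - θ) *
          (Complex.exp (((-1:ℂ) * i) * Complex.I * θ) * Complex.exp (((1:ℂ) * j) * Complex.I * θ)))
        = ∫ θ in (0:ℝ)..(2*Real.pi),
          Complex.I * ((Real.pi:ℂ) - θ) * Complex.exp ((-(((i:ℤ) - (j:ℤ)):ℂ)) * Complex.I * θ) := by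
      refine intervalIntegral.integral_congr fun θ _ => ?_
      rw [← Complex.exp_add]
      congr 2
      push_cast
      ring
    rw [hcongr]
    push_cast
    have h := integral_weight ((i:ℤ) - (j:ℤ))
    push_cast at h
    rw [h]
    have h2π : (2*(Real.pi:ℂ)) ≠ 0 := by
      simp [Real.pi_ne_zero]
    rw [inv_mul_cancel_left₀ h2π]
  -- main identity
  have hA : (B:ℂ) = (2*(Real.pi:ℂ))⁻¹ * ∫ θ in (0:ℝ)..(2*Real.pi),
      Complex.I * ((Real.pi:ℂ) - θ) * (W θ * Y θ) := by
    calc (B:ℂ) = ∑ i ∈ G, (starRingEnd ℂ) (r i) * r i := hB1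
    _ = ∑ i ∈ G, ∑ j ∈ J, ((starRingEnd ℂ) (r i) * y j) * ((i:ℂ) - (j:ℂ))⁻¹ := by
        refine Finset.sum_congr rfl fun i _ => ?_
        rw [hrdef]
        simp only []
        rw [Finset.mul_sum]
        exact Finset.sum_congr rfl fun j _ => by ring
    _ = ∑ i ∈ G, ∑ j ∈ J, (2*(Real.pi:ℂ))⁻¹ * ∫ θ in (0:ℝ)..(2*Real.pi),
          ((starRingEnd ℂ) (r i) * y j) * (Complex.I * ((Real.pi:ℂ) - θ) *
            (Complex.exp (((-1:ℂ) * i) * Complex.I * θ) * Complex.exp (((1:ℂ) * j) * Complex.I * θ))) := by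
        refine Finset.sum_congr rfl fun i _ => Finset.sum_congr rfl fun j _ => ?_
        rw [hinv i j, intervalIntegral.integral_const_mul]
        ring
    _ = (2*(Real.pi:ℂ))⁻¹ * ∑ i ∈ G, ∑ j ∈ J, ∫ θ in (0:ℝ)..(2*Real.pi),
          ((starRingEnd ℂ) (r i) * y j) * (Complex.I * ((Real.pi:ℂ) - θ) *
            (Complex.exp (((-1:ℂ) * i) * Complex.I * θ) * Complex.exp (((1:ℂ) * j) * Complex.I * θ))) := by
        rw [Finset.mul_sum]
        exact Finset.sum_congr rfl fun i _ => (Finset.mul_sum _ _ _).symm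
    _ = (2*(Real.pi:ℂ))⁻¹ * ∫ θ in (0:ℝ)..(2*Real.pi),
          Complex.I * ((Real.pi:ℂ) - θ) * (W θ * Y θ) := by
        congr 1
        have hswap : ∀ i ∈ G, (∑ j ∈ J, ∫ θ in (0:ℝ)..(2*Real.pi),
            ((starRingEnd ℂ) (r i) * y j) * (Complex.I * ((Real.pi:ℂ) - θ) *
              (Complex.exp (((-1:ℂ) * i) * Complex.I * θ) * Complex.exp (((1:ℂ) * j) * Complex.I * θ))))
            = ∫ θ in (0:ℝ)..(2*Real.pi), ∑ j ∈ J,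
            ((starRingEnd ℂ) (r i) * y j) * (Complex.I * ((Real.pi:ℂ) - θ) *
              (Complex.exp (((-1:ℂ) * i) * Complex.I * θ) * Complex.exp (((1:ℂ) * j) * Complex.I * θ))) := by
          intro i _
          exact (intervalIntegral.integral_finset_sum (fun j _ => by
            apply Continuous.intervalIntegrable; fun_prop)).symm
        rw [Finset.sum_congr rfl hswap]
        rw [← intervalIntegral.integral_finset_sum (fun i _ => by
          apply Continuous.intervalIntegrable
          apply continuous_finset_sum
          intro j _
          fun_prop)]
        refine intervalIntegral.integral_congr fun θ _ => ?_
        rw [hWdef, hYdef]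
        simp only []
        rw [Finset.sum_mul_sum, Finset.mul_sum]
        refine Finset.sum_congr rfl fun i _ => ?_
        rw [Finset.mul_sum]
        refine Finset.sum_congr rfl fun j _ => ?_
        ring
  -- Parseval
  have mulconj : ∀ z : ℂ, z * (starRingEnd ℂ) z = ((‖z‖:ℂ))^2 := fun z => by
    rw [Complex.mul_conj, ← Complex.ofReal_pow, Complex.normSq_eq_norm_sq]
  have hPWc : (∫ θ in (0:ℝ)..(2*Real.pi), ((‖W θ‖^2 : ℝ) : ℂ)) = 2*(Real.pi:ℂ) * (B:ℂ) := by
    have h := parseval_aux G (fun i => (starRingEnd ℂ) (r i)) (-1) (Or.inr rfl)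
    simp only [Complex.conj_conj] at h
    rw [← hB1] at h
    rw [← h]
    refine intervalIntegral.integral_congr fun θ _ => ?_
    push_cast
    rw [mulconj]
  have hPW : (∫ θ in (0:ℝ)..(2*Real.pi), (‖W θ‖^2 : ℝ)) = 2*Real.pi * B := by
    have h := hPWc
    rw [intervalIntegral.integral_ofReal] at h
    exact_mod_cast h
  have hBy1 : (By:ℂ) = ∑ j ∈ J, y j * (starRingEnd ℂ) (y j) := by
    rw [hBydef]
    push_cast
    exact Finset.sum_congr rfl fun j _ => (mulconj (y j)).symm
  have hPYc : (∫ θ in (0:ℝ)..(2*Real.pi), ((‖Y θ‖^2 : ℝ) : ℂ)) = 2*(Real.pi:ℂ) * (By:ℂ) := by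
    have h := parseval_aux J y 1 (Or.inl rfl)
    rw [← hBy1] at h
    rw [← h]
    refine intervalIntegral.integral_congr fun θ _ => ?_
    push_cast
    rw [mulconj]
  have hPY : (∫ θ in (0:ℝ)..(2*Real.pi), (‖Y θ‖^2 : ℝ)) = 2*Real.pi * By := by
    have h := hPYc
    rw [intervalIntegral.integral_ofReal] at h
    exact_mod_cast h
  -- pointwise bound
  have habs : ∀ θ ∈ Set.uIoc (0:ℝ) (2*Real.pi),
      ‖Complex.I * ((Real.pi:ℂ) - θ) * (W θ * Y θ)‖ ≤
        (1/2) * (‖W θ‖^2 + Real.pi^2 * ‖Y θ‖^2) := by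
    intro θ hθ
    rw [Set.uIoc_of_le (by positivity)] at hθ
    obtain ⟨h0, h2⟩ := hθ
    have h1 : ‖Complex.I * ((Real.pi:ℂ) - θ) * (W θ * Y θ)‖ = |Real.pi - θ| * (‖W θ‖ * ‖Y θ‖) := by
      rw [norm_mul, norm_mul, norm_mul, Complex.norm_I, one_mul, ← Complex.ofReal_sub,
        Complex.norm_real, Real.norm_eq_abs]
    rw [h1]
    have h3 : |Real.pi - θ| ≤ Real.pi := by
      rw [abs_le]; constructor <;> linarith
    nlinarith [sq_nonneg (‖W θ‖ - Real.pi * ‖Y θ‖), norm_nonneg (W θ), norm_nonneg (Y θ),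
      mul_nonneg (norm_nonneg (W θ)) (norm_nonneg (Y θ)), abs_nonneg (Real.pi - θ)]
  -- final bound
  have hgint : IntervalIntegrable (fun θ : ℝ => (1/2) * (‖W θ‖^2 + Real.pi^2 * ‖Y θ‖^2))
      MeasureTheory.volume 0 (2*Real.pi) := by
    apply Continuous.intervalIntegrable
    fun_prop
  have hBbound : B ≤ (2*Real.pi)⁻¹ * ((1/2) * (2*Real.pi*B + Real.pi^2 * (2*Real.pi*By))) := by
    have hn1 : ‖(2*(Real.pi:ℂ))⁻¹‖ = (2*Real.pi)⁻¹ := by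
      have hcst : (2*(Real.pi:ℂ)) = ((2*Real.pi : ℝ):ℂ) := by push_cast; ring
      rw [norm_inv, hcst, Complex.norm_real, Real.norm_eq_abs, abs_of_pos (by positivity)]
    calc B = ‖(B:ℂ)‖ := by rw [Complex.norm_real, Real.norm_eq_abs, _root_.abs_of_nonneg hBnn]
    _ = ‖(2*(Real.pi:ℂ))⁻¹‖ * ‖∫ θ in (0:ℝ)..(2*Real.pi),
          Complex.I * ((Real.pi:ℂ) - θ) * (W θ * Y θ)‖ := by rw [hA, norm_mul]
    _ ≤ (2*Real.pi)⁻¹ * ∫ θ in (0:ℝ)..(2*Real.pi), (1/2) * (‖W θ‖^2 + Real.pi^2 * ‖Y θ‖^2) := by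
        rw [hn1]
        gcongr
        refine le_trans (intervalIntegral.norm_integral_le_of_norm_le
          (by positivity) (Filter.Eventually.of_forall fun t ht => habs t (by rwa [Set.uIoc_of_le (by positivity)])) hgint) (le_of_eq ?_)
        rfl
    _ = (2*Real.pi)⁻¹ * ((1/2) * (2*Real.pi*B + Real.pi^2 * (2*Real.pi*By))) := by
        rw [intervalIntegral.integral_const_mul]
        rw [intervalIntegral.integral_add (by apply Continuous.intervalIntegrable; fun_prop)
          (by apply Continuous.intervalIntegrable; fun_prop)]
        rw [intervalIntegral.integral_const_mul, hPW, hPY]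
  have hfinal : (2*Real.pi)⁻¹ * ((1/2) * (2*Real.pi*B + Real.pi^2 * (2*Real.pi*By)))
      = B/2 + Real.pi^2*By/2 := by
    field_simp
  rw [hfinal] at hBbound
  linarith
end


noncomputable section

private lemma rpow_two_eq (a : ℝ) : a ^ (2:ℝ) = a ^ 2 := by
  rw [show (2:ℝ) = ((2:ℕ):ℝ) by norm_num, Real.rpow_natCast]

noncomputable def Har (m : ℕ) : ℝ := ∑ t ∈ Finset.range m, (1:ℝ)/(t+1)

private lemma Har_nonneg (m : ℕ) : 0 ≤ Har m :=
  Finset.sum_nonneg fun t _ => by positivity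

private lemma Har_mono : Monotone Har := by
  intro a b hab
  exact Finset.sum_le_sum_of_subset_of_nonneg (Finset.range_subset_range.mpr hab)
    (fun t _ _ => by positivity)

private lemma Har_two_mul (M : ℕ) : Har (2*M) ≤ Har M + 1 := by
  have hsplit : Har (2*M) = Har M + ∑ t ∈ Finset.Ico M (2*M), (1:ℝ)/(t+1) := by
    rw [Har, Har, Finset.range_eq_Ico, Finset.range_eq_Ico,
      Finset.sum_Ico_consecutive _ (Nat.zero_le M) (by omega : M ≤ 2*M)]
  have h2 : ∑ t ∈ Finset.Ico M (2*M), (1:ℝ)/(t+1) ≤ (M:ℝ) * (1/(M+1)) := by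
    have h3 := Finset.sum_le_card_nsmul (Finset.Ico M (2*M)) (fun t => (1:ℝ)/(t+1)) (1/(M+1))
      (fun t ht => by
        rw [Finset.mem_Ico] at ht
        apply one_div_le_one_div_of_le (by positivity)
        have : (M:ℝ) ≤ (t:ℝ) := Nat.cast_le.mpr ht.1
        linarith)
    rw [Nat.card_Ico] at h3
    have : (2*M - M) = M := by omega
    rw [this, nsmul_eq_mul] at h3
    exact h3
  have h4 : (M:ℝ) * (1/(M+1)) ≤ 1 := by
    rw [mul_one_div]
    apply div_le_one_of_le₀ <;> [linarith; positivity]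
  linarith

private lemma nat_sub_cast (i t : ℕ) (h : t < i) : ((i - 1 - t : ℕ) : ℂ) = (i:ℂ) - 1 - (t:ℂ) := by
  have h2 : ((i - 1 - t:ℕ):ℂ) = ((i:ℕ):ℂ) - ((1+t:ℕ):ℂ) := by
    rw [← Nat.cast_sub (by omega)]
    congr 1
    omega
  rw [h2]; push_cast; ring

private lemma sum_inv_left (i : ℕ) :
    ∑ j ∈ Finset.range i, ((i:ℂ) - (j:ℂ))⁻¹ = ((Har i : ℝ) : ℂ) := by
  rw [← Finset.sum_range_reflect, Har]
  push_cast
  refine Finset.sum_congr rfl fun t ht => ?_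
  rw [Finset.mem_range] at ht
  rw [nat_sub_cast i t ht, one_div]
  congr 1
  ring

private lemma sum_inv_left_norm (i : ℕ) :
    ∑ j ∈ Finset.range i, ‖((i:ℂ) - (j:ℂ))⁻¹‖ = Har i := by
  rw [← Finset.sum_range_reflect, Har]
  refine Finset.sum_congr rfl fun t ht => ?_
  rw [Finset.mem_range] at ht
  rw [nat_sub_cast i t ht]
  rw [show (i:ℂ) - ((i:ℂ) - 1 - (t:ℂ)) = (((t+1:ℕ)):ℂ) by push_cast; ring]
  rw [norm_inv, Complex.norm_natCast]
  push_cast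
  ring

private lemma sum_inv_right (i N : ℕ) (h : i < N) :
    ∑ j ∈ Finset.Ico (i+1) N, ((i:ℂ) - (j:ℂ))⁻¹ = -((Har (N-1-i) : ℝ) : ℂ) := by
  rw [Finset.sum_Ico_eq_sum_range]
  have hN : N - (i+1) = N - 1 - i := by omega
  rw [hN, Har]
  push_cast
  rw [← neg_one_mul, Finset.mul_sum]
  refine Finset.sum_congr rfl fun t _ => ?_
  rw [show ((i:ℂ) - ((i:ℂ) + 1 + (t:ℂ))) = -((t:ℂ)+1) by ring, inv_neg, one_div]
  ring

private lemma sum_inv_right_norm (i N : ℕ) (h : i < N) :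
    ∑ j ∈ Finset.Ico (i+1) N, ‖((i:ℂ) - (j:ℂ))⁻¹‖ = Har (N-1-i) := by
  rw [Finset.sum_Ico_eq_sum_range]
  have hN : N - (i+1) = N - 1 - i := by omega
  rw [hN, Har]
  refine Finset.sum_congr rfl fun t _ => ?_
  rw [show (i:ℂ) - ((i + 1 + t : ℕ) : ℂ) = -(((t+1:ℕ)):ℂ) by push_cast; ring]
  rw [norm_inv, norm_neg, Complex.norm_natCast]
  push_cast
  ring


/-- Bennett–Coine necessary condition: if `S` is a Schur multiplier on `ℓ²` and both
iterated limits of its entries exist, then they coincide. -/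
theorem schur_iterated_limits_agree (S : ℕ → ℕ → ℂ) (hS : IsSchurMult 2 S)
    (L1 L2 : ℂ) (R C' : ℕ → ℂ)
    (hR : ∀ k : ℕ, Filter.Tendsto (fun n => S k n) Filter.atTop (nhds (R k)))
    (hL1 : Filter.Tendsto R Filter.atTop (nhds L1))
    (hC : ∀ n : ℕ, Filter.Tendsto (fun k => S k n) Filter.atTop (nhds (C' n)))
    (hL2 : Filter.Tendsto C' Filter.atTop (nhds L2)) :
    L1 = L2 := by
  classical
  by_contra hne
  set d : ℂ := L1 - L2 with hddef
  have hd0 : d ≠ 0 := sub_ne_zero.mpr hne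
  set δ : ℝ := ‖d‖ / 8 with hδdef
  have hδpos : 0 < δ := by
    rw [hδdef]
    have := norm_pos_iff.mpr hd0
    linarith
  -- eventual closeness helper
  have hev : ∀ (f : ℕ → ℂ) (L : ℂ), Tendsto f atTop (nhds L) →
      ∀ᶠ a in atTop, ‖f a - L‖ ≤ δ/2 := by
    intro f L hf
    obtain ⟨N, hN⟩ := Metric.tendsto_atTop.mp hf (δ/2) (half_pos hδpos)
    filter_upwards [eventually_ge_atTop N] with a ha
    rw [← dist_eq_norm]
    exact (hN a ha).le
  -- interleaved choice of rows and columns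
  have pick_exists : ∀ l : List (ℕ × ℕ), ∃ p : ℕ × ℕ,
      (∀ q ∈ l, q.1 < p.1) ∧ (∀ q ∈ l, q.2 < p.2) ∧
      ‖R p.1 - L1‖ ≤ δ/2 ∧ ‖C' p.2 - L2‖ ≤ δ/2 ∧
      (∀ q ∈ l, ‖S p.1 q.2 - C' q.2‖ ≤ δ/2) ∧
      (∀ q ∈ l, ‖S q.1 p.2 - R q.1‖ ≤ δ/2) ∧
      ‖S p.1 p.2 - R p.1‖ ≤ δ/2 := by
    intro l
    have hA1 : ∀ᶠ a in atTop, ‖R a - L1‖ ≤ δ/2 := hev R L1 hL1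
    have hA2 : ∀ᶠ a in atTop, ∀ q ∈ l.toFinset, ‖S a q.2 - C' q.2‖ ≤ δ/2 :=
      (Filter.eventually_all_finset l.toFinset).mpr (fun q _ => hev (fun a => S a q.2) (C' q.2) (hC q.2))
    have hA3 : ∀ᶠ a in atTop, ∀ q ∈ l.toFinset, q.1 < a :=
      (Filter.eventually_all_finset l.toFinset).mpr (fun q _ => eventually_gt_atTop q.1)
    obtain ⟨a, ha1, ha2, ha3⟩ := (hA1.and (hA2.and hA3)).exists
    have hB1 : ∀ᶠ b in atTop, ‖C' b - L2‖ ≤ δ/2 := hev C' L2 hL2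
    have hB2 : ∀ᶠ b in atTop, ∀ q ∈ l.toFinset, ‖S q.1 b - R q.1‖ ≤ δ/2 :=
      (Filter.eventually_all_finset l.toFinset).mpr (fun q _ => hev (fun b => S q.1 b) (R q.1) (hR q.1))
    have hB3 : ∀ᶠ b in atTop, ∀ q ∈ l.toFinset, q.2 < b :=
      (Filter.eventually_all_finset l.toFinset).mpr (fun q _ => eventually_gt_atTop q.2)
    have hB4 : ∀ᶠ b in atTop, ‖S a b - R a‖ ≤ δ/2 := hev (fun b => S a b) (R a) (hR a)
    obtain ⟨b, hb1, hb2, hb3, hb4⟩ := (hB1.and (hB2.and (hB3.and hB4))).exists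
    exact ⟨(a, b), fun q hq => ha3 q (List.mem_toFinset.mpr hq),
      fun q hq => hb3 q (List.mem_toFinset.mpr hq), ha1, hb1,
      fun q hq => ha2 q (List.mem_toFinset.mpr hq),
      fun q hq => hb2 q (List.mem_toFinset.mpr hq), hb4⟩
  set F : ℕ → List (ℕ × ℕ) :=
    fun t => Nat.rec [] (fun _ ih => ih ++ [Classical.choose (pick_exists ih)]) t with hFdef
  set P : ℕ → ℕ × ℕ := fun t => Classical.choose (pick_exists (F t)) with hPdef
  have hFsucc : ∀ t, F (t+1) = F t ++ [P t] := fun t => rfl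
  have hmem : ∀ s t, s < t → P s ∈ F t := by
    intro s t hst
    induction t with
    | zero => omega
    | succ t ih =>
      rw [hFsucc]
      rcases Nat.lt_succ_iff_lt_or_eq.mp hst with h | h
      · exact List.mem_append_left _ (ih h)
      · subst h
        exact List.mem_append_right _ (List.mem_singleton_self _)
  set k : ℕ → ℕ := fun t => (P t).1 with hkdef
  set n : ℕ → ℕ := fun t => (P t).2 with hndef
  have hGood := fun t => Classical.choose_spec (pick_exists (F t))
  have hkmono : StrictMono k := fun s t hst => (hGood t).1 _ (hmem s t hst)
  have hnmono : StrictMono n := fun s t hst => (hGood t).2.1 _ (hmem s t hst)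
  have hkinj : Function.Injective k := hkmono.injective
  have hninj : Function.Injective n := hnmono.injective
  -- the two closeness properties
  have hu : ∀ i j, i ≤ j → ‖S (k i) (n j) - L1‖ ≤ δ := by
    intro i j hij
    rcases lt_or_eq_of_le hij with h | h
    · have h1 := (hGood j).2.2.2.2.2.1 _ (hmem i j h)
      have h2 := (hGood i).2.2.1
      calc ‖S (k i) (n j) - L1‖ ≤ ‖S (k i) (n j) - R (k i)‖ + ‖R (k i) - L1‖ := by
            have := norm_sub_le_norm_sub_add_norm_sub (S (k i) (n j)) (R (k i)) L1
            exact this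
      _ ≤ δ/2 + δ/2 := add_le_add h1 h2
      _ = δ := by ring
    · subst h
      have h1 := (hGood i).2.2.2.2.2.2
      have h2 := (hGood i).2.2.1
      calc ‖S (k i) (n i) - L1‖ ≤ ‖S (k i) (n i) - R (k i)‖ + ‖R (k i) - L1‖ :=
            norm_sub_le_norm_sub_add_norm_sub _ _ _
      _ ≤ δ/2 + δ/2 := add_le_add h1 h2
      _ = δ := by ring
  have hl : ∀ i j, j < i → ‖S (k i) (n j) - L2‖ ≤ δ := by
    intro i j hji
    have h1 := (hGood i).2.2.2.2.1 _ (hmem j i hji)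
    have h2 := (hGood j).2.2.2.1
    calc ‖S (k i) (n j) - L2‖ ≤ ‖S (k i) (n j) - C' (n j)‖ + ‖C' (n j) - L2‖ :=
          norm_sub_le_norm_sub_add_norm_sub _ _ _
    _ ≤ δ/2 + δ/2 := add_le_add h1 h2
    _ = δ := by ring
  -- the Hilbert-pattern matrix
  obtain ⟨A, hAval, hAr0, hAc0⟩ : ∃ A : ℕ → ℕ → ℂ,
      (∀ i j, A (k i) (n j) = ((i:ℂ) - (j:ℂ))⁻¹) ∧
      (∀ r c, (∀ i, k i ≠ r) → A r c = 0) ∧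
      (∀ r c, (∀ j, n j ≠ c) → A r c = 0) := by
    refine ⟨fun r c => if hr : ∃ i, k i = r then (if hc : ∃ j, n j = c then
      ((hr.choose : ℂ) - (hc.choose : ℂ))⁻¹ else 0) else 0, ?_, ?_, ?_⟩
    · intro i j
      have hr : ∃ i', k i' = k i := ⟨i, rfl⟩
      have hc : ∃ j', n j' = n j := ⟨j, rfl⟩
      dsimp only
      rw [dif_pos hr, dif_pos hc, hkinj hr.choose_spec, hninj hc.choose_spec]
    · intro r c h
      dsimp only
      rw [dif_neg (by push_neg; exact h)]
    · intro r c h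
      dsimp only
      by_cases hr : ∃ i, k i = r
      · rw [dif_pos hr, dif_neg (by push_neg; exact h)]
      · rw [dif_neg hr]
  -- row formulas
  have hrow : ∀ (g : ℕ → ℕ → ℂ) (x : ℕ →₀ ℂ) (i : ℕ),
      (∑ c ∈ x.support, g (k i) c * A (k i) c * x c)
        = ∑ j ∈ x.support.preimage n (Function.Injective.injOn hninj),
            g (k i) (n j) * (((i:ℂ) - (j:ℂ))⁻¹ * x (n j)) := by
    intro g x i
    rw [← Finset.sum_filter_add_sum_filter_not x.support (fun c => ∃ j, n j = c)]
    have h2 : ∀ c ∈ x.support.filter (fun c => ¬∃ j, n j = c),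
        g (k i) c * A (k i) c * x c = 0 := by
      intro c hc
      rw [Finset.mem_filter] at hc
      rw [hAc0 _ _ (fun j hj => hc.2 ⟨j, hj⟩)]
      ring
    rw [Finset.sum_eq_zero h2, add_zero]
    have h3 : x.support.filter (fun c => ∃ j, n j = c)
        = (x.support.preimage n (Function.Injective.injOn hninj)).image n := by
      ext c
      simp only [Finset.mem_filter, Finset.mem_image, Finset.mem_preimage]
      constructor
      · rintro ⟨hc, j, rfl⟩
        exact ⟨j, hc, rfl⟩
      · rintro ⟨j, hj, rfl⟩
        exact ⟨hj, j, rfl⟩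
    rw [h3, Finset.sum_image (fun a _ b _ h => hninj h)]
    refine Finset.sum_congr rfl fun j hj => ?_
    rw [hAval]
    ring
  have hrow0 : ∀ (g : ℕ → ℕ → ℂ) (x : ℕ →₀ ℂ) (r : ℕ), (∀ i, k i ≠ r) →
      (∑ c ∈ x.support, g r c * A r c * x c) = 0 := by
    intro g x r hr
    refine Finset.sum_eq_zero fun c _ => ?_
    rw [hAr0 _ _ hr]
    ring
  have hone : ∀ (x : ℕ →₀ ℂ) (r : ℕ), (∑ c ∈ x.support, A r c * x c)
      = ∑ c ∈ x.support, (1:ℂ) * A r c * x c := by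
    intro x r
    exact Finset.sum_congr rfl fun c _ => by ring
  -- boundedness of A
  have hMB : MatBound 2 A Real.pi := by
    intro x
    set J := x.support.preimage n (Function.Injective.injOn hninj) with hJdef
    set y : ℕ → ℂ := fun j => x (n j) with hydef
    have hysum : ∑ j ∈ J, ‖y j‖^2 ≤ ∑ c ∈ x.support, ‖x c‖^2 := by
      have h5 : ∑ c ∈ J.image n, ‖x c‖^2 = ∑ j ∈ J, ‖x (n j)‖^2 :=
        Finset.sum_image (fun a _ b _ h => hninj h)
      have h6 : ∑ j ∈ J, ‖y j‖^2 = ∑ c ∈ J.image n, ‖x c‖^2 := h5.symm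
      rw [h6]
      apply Finset.sum_le_sum_of_subset_of_nonneg
      · intro c hc
        rw [Finset.mem_image] at hc
        obtain ⟨j, hj, rfl⟩ := hc
        rw [hJdef, Finset.mem_preimage] at hj
        exact hj
      · intro c _ _
        positivity
    have hpart : ∀ u : Finset ℕ, (∑ r ∈ u, ‖∑ c ∈ x.support, A r c * x c‖ ^ (2:ℝ))
        ≤ Real.pi^2 * ∑ c ∈ x.support, ‖x c‖^2 := by
      intro u
      have hvanish : ∀ r ∈ u, r ∉ Set.range k → ‖∑ c ∈ x.support, A r c * x c‖ ^ (2:ℝ) = 0 := by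
        intro r _ hr
        rw [hone, hrow0 (fun _ _ => (1:ℂ)) x r (fun i hi => hr ⟨i, hi⟩)]
        rw [norm_zero]
        rw [Real.zero_rpow (by norm_num)]
      have h2 := Finset.sum_preimage k u (Function.Injective.injOn hkinj)
        (fun r => ‖∑ c ∈ x.support, A r c * x c‖ ^ (2:ℝ)) hvanish
      rw [← h2]
      have h3 : ∀ i ∈ u.preimage k (Function.Injective.injOn hkinj),
          ‖∑ c ∈ x.support, A (k i) c * x c‖ ^ (2:ℝ)
            = ‖∑ j ∈ J, ((i:ℂ) - (j:ℂ))⁻¹ * y j‖^2 := by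
        intro i _
        rw [rpow_two_eq, hone, hrow (fun _ _ => (1:ℂ)) x i]
        congr 2
        exact Finset.sum_congr rfl fun j _ => by rw [hydef]; ring
      rw [Finset.sum_congr rfl h3]
      calc ∑ i ∈ u.preimage k (Function.Injective.injOn hkinj),
            ‖∑ j ∈ J, ((i:ℂ) - (j:ℂ))⁻¹ * y j‖^2
          ≤ Real.pi^2 * ∑ j ∈ J, ‖y j‖^2 := hilbert_rows _ J y
      _ ≤ Real.pi^2 * ∑ c ∈ x.support, ‖x c‖^2 := by
          apply mul_le_mul_of_nonneg_left hysum (by positivity)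
    have hsummable : Summable (fun r : ℕ => ‖∑ c ∈ x.support, A r c * x c‖ ^ (2:ℝ)) :=
      summable_of_sum_le (fun r => Real.rpow_nonneg (norm_nonneg _) _) hpart
    refine ⟨hsummable, ?_⟩
    have h4 := Summable.tsum_le_of_sum_le hsummable hpart
    calc (∑' r : ℕ, ‖∑ c ∈ x.support, A r c * x c‖ ^ (2:ℝ))
        ≤ Real.pi^2 * ∑ c ∈ x.support, ‖x c‖^2 := h4
    _ = Real.pi ^ (2:ℝ) * ∑ c ∈ x.support, ‖x c‖ ^ (2:ℝ) := by
        rw [rpow_two_eq]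
        congr 1
        exact Finset.sum_congr rfl fun c _ => (rpow_two_eq _).symm
  -- apply the Schur multiplier hypothesis
  obtain ⟨C, hC0, hSA⟩ := hS A ⟨Real.pi, Real.pi_pos.le, hMB⟩
  -- harmonic divergence
  have hHarT : Tendsto Har atTop atTop := by
    have := Real.tendsto_sum_range_one_div_nat_succ_atTop
    exact this
  set K : ℝ := ‖d‖/4 + ‖L2‖ with hKdef
  have hlowT : Tendsto (fun M : ℕ => (3/4*‖d‖) * Har M - K) atTop atTop := by
    have hdpos : (0:ℝ) < 3/4*‖d‖ := by
      have := norm_pos_iff.mpr hd0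
      linarith
    have h1 : Tendsto (fun M : ℕ => (3/4*‖d‖) * Har M) atTop atTop :=
      Tendsto.const_mul_atTop hdpos hHarT
    have h2 := tendsto_atTop_add_const_right atTop (-K) h1
    refine h2.congr fun M => ?_
    ring
  obtain ⟨M, hM1, hMlow⟩ : ∃ M : ℕ, 1 ≤ M ∧ 3*C + 1 ≤ (3/4*‖d‖) * Har M - K := by
    obtain ⟨M, hM⟩ := ((hlowT.eventually_ge_atTop (3*C+1)).and (eventually_ge_atTop 1)).exists
    exact ⟨M, hM.2, hM.1⟩
  set lb : ℝ := 3/4*‖d‖ * Har M - K with hlbdef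
  have hlb0 : 0 ≤ lb := by
    have : (0:ℝ) ≤ 3*C + 1 := by linarith
    linarith
  -- the test vector
  set s : Finset ℕ := (Finset.range (3*M)).image n with hsdef
  set x : ℕ →₀ ℂ := ⟨s, fun c => if c ∈ s then 1 else 0, by
    intro a
    by_cases hx : a ∈ s <;> simp [hx]⟩ with hxdef
  have hxsupp : x.support = s := rfl
  have hxval : ∀ c ∈ s, x c = 1 := fun c hc => if_pos hc
  -- row values
  have hT : ∀ i : ℕ, (∑ c ∈ x.support, (S (k i) c * A (k i) c) * x c)
      = ∑ j ∈ Finset.range (3*M), S (k i) (n j) * ((i:ℂ) - (j:ℂ))⁻¹ := by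
    intro i
    rw [hxsupp, hsdef, Finset.sum_image (fun a _ b _ hab => hninj hab)]
    refine Finset.sum_congr rfl fun j hj => ?_
    have hin : n j ∈ s := by
      rw [hsdef]
      exact Finset.mem_image_of_mem n hj
    rw [hxval _ hin, hAval, mul_one]
  -- per-row lower bound
  have hrowlb : ∀ i, M ≤ i → i < 2*M →
      lb ≤ ‖∑ j ∈ Finset.range (3*M), S (k i) (n j) * ((i:ℂ) - (j:ℂ))⁻¹‖ := by
    intro i hMi hi2M
    have hi3M : i < 3*M := by omega
    set σ : ℕ → ℂ := fun j => S (k i) (n j) with hσdef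
    set v : ℕ → ℂ := fun j => ((i:ℂ) - (j:ℂ))⁻¹ with hvdef
    have hsplit : ∀ f : ℕ → ℂ, (∑ j ∈ Finset.range (3*M), f j)
        = (∑ j ∈ Finset.range i, f j) + f i + ∑ j ∈ Finset.Ico (i+1) (3*M), f j := by
      intro f
      rw [Finset.range_eq_Ico,
        ← Finset.sum_Ico_consecutive f (Nat.zero_le i) (le_of_lt hi3M),
        Finset.sum_eq_sum_Ico_succ_bot hi3M]
      rw [← Finset.range_eq_Ico]
      ring
    have hvi : v i = 0 := by
      rw [hvdef]
      simp
    have hQ : (∑ j ∈ Finset.Ico (i+1) (3*M), v j) = -((Har (3*M-1-i) : ℝ):ℂ) :=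
      sum_inv_right i (3*M) hi3M
    have hP : (∑ j ∈ Finset.range i, v j) = ((Har i : ℝ):ℂ) := sum_inv_left i
    set main : ℂ := L2 * (∑ j ∈ Finset.range (3*M), v j)
      + d * (∑ j ∈ Finset.Ico (i+1) (3*M), v j) with hmaindef
    have herr : ‖(∑ j ∈ Finset.range (3*M), σ j * v j) - main‖
        ≤ δ * (Har i + Har (3*M-1-i)) := by
      have hδsum : (∑ j ∈ Finset.range (3*M), σ j * v j) - main
          = (∑ j ∈ Finset.range i, (σ j - L2) * v j)
            + ∑ j ∈ Finset.Ico (i+1) (3*M), (σ j - L2 - d) * v j := by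
        have e1 : (∑ j ∈ Finset.range i, (σ j - L2) * v j)
            = (∑ j ∈ Finset.range i, σ j * v j) - L2 * ∑ j ∈ Finset.range i, v j := by
          rw [Finset.mul_sum, ← Finset.sum_sub_distrib]
          exact Finset.sum_congr rfl fun j _ => by ring
        have e2 : (∑ j ∈ Finset.Ico (i+1) (3*M), (σ j - L2 - d) * v j)
            = (∑ j ∈ Finset.Ico (i+1) (3*M), σ j * v j)
              - L2 * (∑ j ∈ Finset.Ico (i+1) (3*M), v j)
              - d * ∑ j ∈ Finset.Ico (i+1) (3*M), v j := by
          rw [Finset.mul_sum, Finset.mul_sum, ← Finset.sum_sub_distrib, ← Finset.sum_sub_distrib]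
          exact Finset.sum_congr rfl fun j _ => by ring
        rw [e1, e2, hmaindef, hsplit (fun j => σ j * v j), hsplit v, hvi]
        ring
      rw [hδsum]
      have b1 : ‖∑ j ∈ Finset.range i, (σ j - L2) * v j‖ ≤ δ * Har i := by
        calc ‖∑ j ∈ Finset.range i, (σ j - L2) * v j‖
            ≤ ∑ j ∈ Finset.range i, ‖(σ j - L2) * v j‖ := norm_sum_le _ _
        _ ≤ ∑ j ∈ Finset.range i, δ * ‖v j‖ := by
            refine Finset.sum_le_sum fun j hj => ?_
            rw [Finset.mem_range] at hj
            rw [norm_mul]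
            exact mul_le_mul_of_nonneg_right (hl i j hj) (norm_nonneg _)
        _ = δ * Har i := by
            rw [← Finset.mul_sum, sum_inv_left_norm i]
      have b2 : ‖∑ j ∈ Finset.Ico (i+1) (3*M), (σ j - L2 - d) * v j‖
          ≤ δ * Har (3*M-1-i) := by
        calc ‖∑ j ∈ Finset.Ico (i+1) (3*M), (σ j - L2 - d) * v j‖
            ≤ ∑ j ∈ Finset.Ico (i+1) (3*M), ‖(σ j - L2 - d) * v j‖ := norm_sum_le _ _
        _ ≤ ∑ j ∈ Finset.Ico (i+1) (3*M), δ * ‖v j‖ := by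
            refine Finset.sum_le_sum fun j hj => ?_
            rw [Finset.mem_Ico] at hj
            rw [norm_mul]
            refine mul_le_mul_of_nonneg_right ?_ (norm_nonneg _)
            have : σ j - L2 - d = σ j - L1 := by
              rw [hddef]
              ring
            rw [this]
            exact hu i j (by omega)
        _ = δ * Har (3*M-1-i) := by
            rw [← Finset.mul_sum, sum_inv_right_norm i (3*M) hi3M]
      calc ‖(∑ j ∈ Finset.range i, (σ j - L2) * v j)
            + ∑ j ∈ Finset.Ico (i+1) (3*M), (σ j - L2 - d) * v j‖
          ≤ ‖∑ j ∈ Finset.range i, (σ j - L2) * v j‖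
            + ‖∑ j ∈ Finset.Ico (i+1) (3*M), (σ j - L2 - d) * v j‖ := norm_add_le _ _
      _ ≤ δ * Har i + δ * Har (3*M-1-i) := add_le_add b1 b2
      _ = δ * (Har i + Har (3*M-1-i)) := by ring
    have hmain : ‖d‖ * Har (3*M-1-i) - ‖L2‖ * |Har i - Har (3*M-1-i)|
        ≤ ‖main‖ := by
      have hm2 : main = L2 * (((Har i:ℝ):ℂ) - ((Har (3*M-1-i):ℝ):ℂ))
          - d * ((Har (3*M-1-i):ℝ):ℂ) := by
        rw [hmaindef, hsplit v, hP, hQ, hvi]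
        ring
      have hn1 : ‖d * ((Har (3*M-1-i):ℝ):ℂ)‖ = ‖d‖ * Har (3*M-1-i) := by
        rw [norm_mul, Complex.norm_real, Real.norm_eq_abs, _root_.abs_of_nonneg (Har_nonneg _)]
      have hn2 : ‖L2 * (((Har i:ℝ):ℂ) - ((Har (3*M-1-i):ℝ):ℂ))‖
          = ‖L2‖ * |Har i - Har (3*M-1-i)| := by
        rw [norm_mul, ← Complex.ofReal_sub, Complex.norm_real, Real.norm_eq_abs]
      rw [hm2]
      calc ‖d‖ * Har (3*M-1-i) - ‖L2‖ * |Har i - Har (3*M-1-i)|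
          = ‖d * ((Har (3*M-1-i):ℝ):ℂ)‖
            - ‖L2 * (((Har i:ℝ):ℂ) - ((Har (3*M-1-i):ℝ):ℂ))‖ := by rw [hn1, hn2]
      _ ≤ ‖L2 * (((Har i:ℝ):ℂ) - ((Har (3*M-1-i):ℝ):ℂ)) - d * ((Har (3*M-1-i):ℝ):ℂ)‖ := by
          have h5 := norm_sub_norm_le (d * ((Har (3*M-1-i):ℝ):ℂ))
            (L2 * (((Har i:ℝ):ℂ) - ((Har (3*M-1-i):ℝ):ℂ)))
          rw [norm_sub_rev] at h5
          linarith
    have htri : ‖main‖ - ‖(∑ j ∈ Finset.range (3*M), σ j * v j) - main‖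
        ≤ ‖∑ j ∈ Finset.range (3*M), σ j * v j‖ := by
      have h5 := norm_sub_norm_le main (∑ j ∈ Finset.range (3*M), σ j * v j)
      rw [norm_sub_rev] at h5
      linarith
    have hHarQ1 : Har M ≤ Har (3*M-1-i) := Har_mono (by omega)
    have hHarQ2 : Har (3*M-1-i) ≤ Har (2*M) := Har_mono (by omega)
    have hHarI1 : Har M ≤ Har i := Har_mono hMi
    have hHarI2 : Har i ≤ Har (2*M) := Har_mono (by omega : i ≤ 2*M)
    have h2M := Har_two_mul M
    have habs1 : |Har i - Har (3*M-1-i)| ≤ 1 := abs_le.mpr ⟨by linarith, by linarith⟩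
    have hdnn : (0:ℝ) ≤ ‖d‖ := norm_nonneg d
    have hL2nn : (0:ℝ) ≤ ‖L2‖ := norm_nonneg L2
    have habsnn : (0:ℝ) ≤ |Har i - Har (3*M-1-i)| := abs_nonneg _
    show lb ≤ ‖∑ j ∈ Finset.range (3*M), σ j * v j‖
    have hmono1 : ‖d‖ * Har M ≤ ‖d‖ * Har (3*M-1-i) :=
      mul_le_mul_of_nonneg_left hHarQ1 hdnn
    have hmono2 : ‖L2‖ * |Har i - Har (3*M-1-i)| ≤ ‖L2‖ * 1 :=
      mul_le_mul_of_nonneg_left habs1 hL2nn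
    have hmono3 : δ * (Har i + Har (3*M-1-i)) ≤ δ * (2 * Har M + 2) := by
      apply mul_le_mul_of_nonneg_left _ (le_of_lt hδpos)
      linarith
    rw [hlbdef, hKdef, hδdef] at *
    linarith
  -- sum over the middle rows
  obtain ⟨hsum2, hbound2⟩ := hSA x
  set G2 : Finset ℕ := (Finset.Ico M (2*M)).image k with hG2def
  have hGsum : (∑ r ∈ G2, ‖∑ c ∈ x.support, (S r c * A r c) * x c‖^(2:ℝ))
      = ∑ i ∈ Finset.Ico M (2*M),
          ‖∑ j ∈ Finset.range (3*M), S (k i) (n j) * ((i:ℂ) - (j:ℂ))⁻¹‖^(2:ℝ) := by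
    rw [hG2def, Finset.sum_image (fun a _ b _ hab => hkinj hab)]
    exact Finset.sum_congr rfl fun i _ => by rw [hT i]
  have hlower : (M:ℝ) * lb^2 ≤ ∑ r ∈ G2, ‖∑ c ∈ x.support, (S r c * A r c) * x c‖^(2:ℝ) := by
    rw [hGsum]
    have h6 : ∀ i ∈ Finset.Ico M (2*M), lb^2
        ≤ ‖∑ j ∈ Finset.range (3*M), S (k i) (n j) * ((i:ℂ) - (j:ℂ))⁻¹‖^(2:ℝ) := by
      intro i hi
      rw [Finset.mem_Ico] at hi
      rw [rpow_two_eq]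
      exact pow_le_pow_left₀ hlb0 (hrowlb i hi.1 hi.2) 2
    calc (M:ℝ) * lb^2 = ∑ _i ∈ Finset.Ico M (2*M), lb^2 := by
          rw [Finset.sum_const, Nat.card_Ico, nsmul_eq_mul]
          congr 2
          omega
    _ ≤ _ := Finset.sum_le_sum h6
  have hupper : (∑ r ∈ G2, ‖∑ c ∈ x.support, (S r c * A r c) * x c‖^(2:ℝ))
      ≤ C^(2:ℝ) * ∑ c ∈ x.support, ‖x c‖^(2:ℝ) := by
    refine le_trans (Summable.sum_le_tsum G2 (fun r _ => Real.rpow_nonneg (norm_nonneg _) _) hsum2) ?_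
    exact hbound2
  have hsuppsum : (∑ c ∈ x.support, ‖x c‖^(2:ℝ)) = (3*M:ℝ) := by
    rw [hxsupp]
    have h7 : ∀ c ∈ s, ‖x c‖^(2:ℝ) = 1 := by
      intro c hc
      rw [hxval c hc, norm_one, Real.one_rpow]
    rw [Finset.sum_congr rfl h7, Finset.sum_const, hsdef,
      Finset.card_image_of_injective _ hninj, Finset.card_range, nsmul_eq_mul, mul_one]
    push_cast
    ring
  rw [hsuppsum, rpow_two_eq] at hupper
  have hfinal : (M:ℝ) * lb^2 ≤ C^2 * (3*M) := le_trans hlower (le_trans hupper (le_refl _))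
  have hMR : (1:ℝ) ≤ (M:ℝ) := by exact_mod_cast hM1
  have hlb3 : 3*C+1 ≤ lb := hMlow
  have h9 : (3*C+1)^2 ≤ lb^2 := by nlinarith
  have h10 : (M:ℝ) * (3*C+1)^2 ≤ (M:ℝ) * lb^2 :=
    mul_le_mul_of_nonneg_left h9 (by linarith)
  nlinarith [mul_nonneg (mul_nonneg hC0 hC0) (by linarith : (0:ℝ) ≤ (M:ℝ)),
    mul_nonneg hC0 (by linarith : (0:ℝ) ≤ (M:ℝ))]
end
end

section
/- The lower-triangular truncation of the discrete Hilbert transform, i.e. the matrix with entries 1/(n−k) for 0 ≤ k < n and 0 otherwise, is not a bounded operator on ℓ². -/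
open scoped BigOperators
open Finset Filter

section Aux

noncomputable def Htr (n : ℕ) : ℝ := ∑ i ∈ Finset.range n, 1/((i:ℝ)+1)

lemma Htr_mono : Monotone Htr := by
  intro m n h
  exact Finset.sum_le_sum_of_subset_of_nonneg (Finset.range_subset_range.2 h)
    (fun i _ _ => by positivity)

lemma Htr_tendsto : Tendsto Htr atTop atTop :=
  Real.tendsto_sum_range_one_div_nat_succ_atTop

lemma reflect_sum (n : ℕ) :
    ∑ k ∈ Finset.range n, ((n:ℝ) - (k:ℝ))⁻¹ = Htr n := by
  rw [← Finset.sum_range_reflect (fun k => ((n:ℝ) - (k:ℝ))⁻¹) n, Htr]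
  apply Finset.sum_congr rfl
  intro j hj
  rw [Finset.mem_range] at hj
  have he : n - 1 - j = n - (j+1) := by omega
  have h1 : (((n - 1 - j : ℕ)) : ℝ) = (n:ℝ) - ((j:ℝ)+1) := by
    rw [he, Nat.cast_sub (by omega : j + 1 ≤ n)]; push_cast; ring
  rw [h1, one_div]
  ring_nf

lemma Htr_Ico (M N : ℕ) (h : M ≤ N) :
    ∑ n ∈ Finset.Ico (M+1) (N+1), ((n:ℝ))⁻¹ = Htr N - Htr M := by
  simp only [Htr]
  rw [← Finset.sum_Ico_eq_sub (fun i => 1/((i:ℝ)+1)) h]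
  rw [Finset.sum_Ico_eq_sum_range, Finset.sum_Ico_eq_sum_range]
  simp only [Nat.add_sub_add_right]
  apply Finset.sum_congr rfl
  intro i _
  push_cast
  rw [one_div]
  ring_nf

end Aux

/-- The strictly lower triangular truncation of the discrete Hilbert transform, with
entries `1/(n−k)` for `0 ≤ k < n` and `0` otherwise, is unbounded on `ℓ²`. -/
theorem truncated_hilbert_unbounded :
    ¬ IsBoundedOn 2 (fun n k => if k < n then 1 / ((n : ℂ) - (k : ℂ)) else 0) := by
  rintro ⟨C, hC0, hB⟩
  obtain ⟨M, hM⟩ := (Htr_tendsto.eventually_ge_atTop (2*C+2)).exists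
  obtain ⟨N, hN⟩ := (Htr_tendsto.eventually_ge_atTop (2*Htr M+1)).exists
  have hHM2 : (2:ℝ) ≤ Htr M := by linarith
  have hMN : M ≤ N := by
    by_contra h
    have := Htr_mono (le_of_not_ge h)
    linarith
  set f : ℕ → ℂ := fun k => if k < N then ((Real.sqrt ((k:ℝ)+1))⁻¹ : ℂ) else 0 with hf
  have hfmem : ∀ a, f a ≠ 0 → a ∈ Finset.range N := by
    intro a ha
    rw [Finset.mem_range]
    by_contra h
    exact ha (if_neg h)
  set x : ℕ →₀ ℂ := Finsupp.onFinset (Finset.range N) f hfmem with hx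
  have hxk : ∀ k, k < N → x k = ((Real.sqrt ((k:ℝ)+1))⁻¹ : ℂ) := by
    intro k hk
    simp only [hx, Finsupp.onFinset_apply, hf, if_pos hk]
  have hsupp : x.support ⊆ Finset.range N := Finsupp.support_onFinset_subset
  obtain ⟨hsumm, hle⟩ := hB x
  simp only at hsumm hle
  set g : ℕ → ℝ := fun n => ∑ k ∈ Finset.range n, ((n:ℝ) - (k:ℝ))⁻¹ * (Real.sqrt ((k:ℝ)+1))⁻¹
    with hg
  have hgnn : ∀ n, 0 ≤ g n := by
    intro n
    apply Finset.sum_nonneg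
    intro k hk
    rw [Finset.mem_range] at hk
    have h1 : (0:ℝ) < (n:ℝ) - (k:ℝ) := by
      have : (k:ℝ) < (n:ℝ) := by exact_mod_cast hk
      linarith
    positivity
  -- the inner sum is a real number
  have key : ∀ n, n ≤ N →
      ∑ k ∈ x.support, (if k < n then 1 / ((n : ℂ) - (k : ℂ)) else 0) * x k = ((g n : ℝ) : ℂ) := by
    intro n hnN
    have h1 : ∀ k ∈ Finset.range N, k ∉ x.support →
        (if k < n then 1 / ((n : ℂ) - (k : ℂ)) else 0) * x k = 0 := by
      intro k _ hk
      rw [Finsupp.notMem_support_iff.1 hk, mul_zero]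
    rw [Finset.sum_subset hsupp h1]
    have h2 : ∀ k ∈ Finset.range N, k ∉ Finset.range n →
        (if k < n then 1 / ((n : ℂ) - (k : ℂ)) else 0) * x k = 0 := by
      intro k _ hk
      rw [Finset.mem_range, not_lt] at hk
      rw [if_neg (not_lt.2 hk), zero_mul]
    rw [← Finset.sum_subset (Finset.range_subset_range.2 hnN) h2]
    rw [hg]
    push_cast [Complex.ofReal_sum]
    apply Finset.sum_congr rfl
    intro k hk
    rw [Finset.mem_range] at hk
    rw [if_pos hk, hxk k (hk.trans_le hnN)]
    push_cast
    rw [one_div]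
  -- lower bound on g
  have hglb : ∀ n, 1 ≤ n → Htr n * (Real.sqrt (n:ℝ))⁻¹ ≤ g n := by
    intro n hn
    have : Htr n * (Real.sqrt (n:ℝ))⁻¹
        = ∑ k ∈ Finset.range n, ((n:ℝ) - (k:ℝ))⁻¹ * (Real.sqrt (n:ℝ))⁻¹ := by
      rw [← Finset.sum_mul, reflect_sum]
    rw [this, hg]
    apply Finset.sum_le_sum
    intro k hk
    rw [Finset.mem_range] at hk
    have hkr : (k:ℝ) < (n:ℝ) := by exact_mod_cast hk
    have hsle : Real.sqrt ((k:ℝ)+1) ≤ Real.sqrt (n:ℝ) := by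
      apply Real.sqrt_le_sqrt
      exact_mod_cast hk
    have hspos : 0 < Real.sqrt ((k:ℝ)+1) := Real.sqrt_pos.2 (by positivity)
    have : (Real.sqrt (n:ℝ))⁻¹ ≤ (Real.sqrt ((k:ℝ)+1))⁻¹ :=
      inv_anti₀ hspos hsle
    apply mul_le_mul_of_nonneg_left this
    have h1 : (0:ℝ) < (n:ℝ) - (k:ℝ) := by linarith
    positivity
  -- per row lower bound on the norm squared
  have hrow : ∀ n ∈ Finset.Ico (M+1) (N+1),
      (Htr M)^2 * ((n:ℝ))⁻¹ ≤
        ‖∑ k ∈ x.support, (if k < n then 1 / ((n : ℂ) - (k : ℂ)) else 0) * x k‖ ^ (2:ℝ) := by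
    intro n hn
    rw [Finset.mem_Ico] at hn
    have hn1 : 1 ≤ n := by omega
    have hnN : n ≤ N := by omega
    rw [key n hnN, Real.rpow_two, Complex.norm_real, Real.norm_of_nonneg (hgnn n)]
    have hb : Htr n * (Real.sqrt (n:ℝ))⁻¹ ≤ g n := hglb n hn1
    have hHn : Htr M ≤ Htr n := Htr_mono (by omega)
    have hHnn : 0 ≤ Htr n := by linarith
    have hnpos : (0:ℝ) < (n:ℝ) := by exact_mod_cast hn1
    have hsq : (Htr n * (Real.sqrt (n:ℝ))⁻¹)^2 = (Htr n)^2 * ((n:ℝ))⁻¹ := by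
      rw [mul_pow, inv_pow, Real.sq_sqrt hnpos.le]
    have h1 : (Htr n)^2 * ((n:ℝ))⁻¹ ≤ (g n)^2 := by
      rw [← hsq]
      apply pow_le_pow_left₀ (by positivity) hb
    have h2 : (Htr M)^2 * ((n:ℝ))⁻¹ ≤ (Htr n)^2 * ((n:ℝ))⁻¹ := by
      apply mul_le_mul_of_nonneg_right _ (by positivity)
      apply pow_le_pow_left₀ (by linarith) hHn
    linarith
  -- sum the lower bounds
  have hlb : (Htr M)^2 * (Htr N - Htr M) ≤
      ∑ n ∈ Finset.Ico (M+1) (N+1),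
        ‖∑ k ∈ x.support, (if k < n then 1 / ((n : ℂ) - (k : ℂ)) else 0) * x k‖ ^ (2:ℝ) := by
    calc (Htr M)^2 * (Htr N - Htr M)
        = ∑ n ∈ Finset.Ico (M+1) (N+1), (Htr M)^2 * ((n:ℝ))⁻¹ := by
          rw [← Finset.mul_sum, Htr_Ico M N hMN]
      _ ≤ _ := Finset.sum_le_sum hrow
  have htsum : ∑ n ∈ Finset.Ico (M+1) (N+1),
        ‖∑ k ∈ x.support, (if k < n then 1 / ((n : ℂ) - (k : ℂ)) else 0) * x k‖ ^ (2:ℝ) ≤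
      ∑' n : ℕ, ‖∑ k ∈ x.support, (if k < n then 1 / ((n : ℂ) - (k : ℂ)) else 0) * x k‖ ^ (2:ℝ) :=
    Summable.sum_le_tsum _ (fun i _ => Real.rpow_nonneg (norm_nonneg _) _) hsumm
  -- upper bound of the RHS
  have hrhs : ∑ k ∈ x.support, ‖x k‖ ^ (2:ℝ) ≤ Htr N := by
    calc ∑ k ∈ x.support, ‖x k‖ ^ (2:ℝ)
        ≤ ∑ k ∈ Finset.range N, ‖x k‖ ^ (2:ℝ) :=
          Finset.sum_le_sum_of_subset_of_nonneg hsupp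
            (fun i _ _ => Real.rpow_nonneg (norm_nonneg _) _)
      _ = Htr N := by
          apply Finset.sum_congr rfl
          intro k hk
          rw [Finset.mem_range] at hk
          rw [hxk k hk, Real.rpow_two, norm_inv, Complex.norm_real,
            Real.norm_of_nonneg (Real.sqrt_nonneg _), inv_pow,
            Real.sq_sqrt (by positivity : (0:ℝ) ≤ (k:ℝ)+1), one_div]
  have hfinal : (Htr M)^2 * (Htr N - Htr M) ≤ C^2 * Htr N := by
    have h1 := le_trans (le_trans hlb htsum) hle
    rw [Real.rpow_two C] at h1
    have h2 : C^2 * ∑ k ∈ x.support, ‖x k‖ ^ (2:ℝ) ≤ C^2 * Htr N :=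
      mul_le_mul_of_nonneg_left hrhs (by positivity)
    exact h1.trans h2
  have hC2 : 4*C^2 ≤ (Htr M - 2)^2 := by nlinarith
  have hNnn : (0:ℝ) ≤ Htr N := by linarith
  have h4 : 4*C^2*Htr N ≤ (Htr M - 2)^2 * Htr N :=
    mul_le_mul_of_nonneg_right hC2 hNnn
  have h5 : Htr N * (3*(Htr M)^2 + 4*Htr M - 4) ≤ 4*(Htr M)^3 := by nlinarith [hfinal, h4]
  have h6 : (0:ℝ) ≤ 3*(Htr M)^2 + 4*Htr M - 4 := by nlinarith [hHM2]
  have h7 : (2*Htr M+1) * (3*(Htr M)^2 + 4*Htr M - 4) ≤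
      Htr N * (3*(Htr M)^2 + 4*Htr M - 4) :=
    mul_le_mul_of_nonneg_right hN h6
  nlinarith [h5, h7, hHM2, sq_nonneg (Htr M - 2)]
end

section
/- Let ω = (ω_n) be a positive weight with lim_n ω_n/ω_{n+1} = 1, and 1 < p < ∞. If g is a multiplier of the weighted space ℓ^p_A(ω) (i.e., multiplication by g is bounded on ℓ^p_A(ω)), then the generalized Volterra operator T_g f(z) = ∫_0^z f(t) g'(t) dt is bounded on ℓ^p_A(ω). -/
open scoped BigOperators

noncomputable def WMatBound (p : ℝ) (ω : ℕ → ℝ) (A : ℕ → ℕ → ℂ) (C : ℝ) : Prop :=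
  ∀ x : ℕ →₀ ℂ,
    Summable (fun n : ℕ => ‖∑ k ∈ x.support, A n k * x k‖ ^ p * ω n) ∧
    ∑' n : ℕ, ‖∑ k ∈ x.support, A n k * x k‖ ^ p * ω n ≤
      C ^ p * ∑ k ∈ x.support, ‖x k‖ ^ p * ω k


private lemma jensen_aux {p : ℝ} (hp : 1 < p) (S : Finset ℕ) (μ b : ℕ → ℝ)
    (hμ : ∀ i ∈ S, 0 ≤ μ i) (hb : ∀ i ∈ S, 0 ≤ b i) :
    (∑ i ∈ S, μ i * b i) ^ p ≤ (∑ i ∈ S, μ i) ^ (p - 1) * ∑ i ∈ S, μ i * b i ^ p := by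
  set W := ∑ i ∈ S, μ i with hW
  have hW0 : 0 ≤ W := Finset.sum_nonneg hμ
  rcases eq_or_lt_of_le hW0 with h0 | hpos
  · have hz : ∀ i ∈ S, μ i = 0 := by
      intro i hi
      exact (Finset.sum_eq_zero_iff_of_nonneg hμ).mp h0.symm i hi
    have h1 : (∑ i ∈ S, μ i * b i) = 0 :=
      Finset.sum_eq_zero fun i hi => by rw [hz i hi, zero_mul]
    rw [h1, Real.zero_rpow (by linarith)]
    have : 0 ≤ ∑ i ∈ S, μ i * b i ^ p :=
      Finset.sum_nonneg fun i hi => mul_nonneg (hμ i hi) (Real.rpow_nonneg (hb i hi) p)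
    have h2 : (0:ℝ) ≤ W ^ (p-1) := Real.rpow_nonneg hW0 _
    positivity
  · have key := Real.rpow_arith_mean_le_arith_mean_rpow S (fun i => μ i / W)
      (fun i => W * b i) (fun i hi => div_nonneg (hμ i hi) hW0)
      (by rw [← Finset.sum_div, ← hW, div_self hpos.ne']) 
      (fun i hi => mul_nonneg hW0 (hb i hi)) hp.le
    have e1 : ∀ i ∈ S, μ i / W * (W * b i) = μ i * b i := by
      intro i hi; field_simp
    have e2 : ∀ i ∈ S, μ i / W * (W * b i) ^ p = W ^ (p-1) * (μ i * b i ^ p) := by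
      intro i hi
      rw [Real.mul_rpow hW0 (hb i hi)]
      have : W ^ p = W ^ (p-1) * W := by
        rw [← Real.rpow_add_one hpos.ne' (p-1)]; ring_nf
      rw [this]
      field_simp
    calc (∑ i ∈ S, μ i * b i) ^ p 
        = (∑ i ∈ S, μ i / W * (W * b i)) ^ p := by rw [Finset.sum_congr rfl e1]
      _ ≤ ∑ i ∈ S, μ i / W * (W * b i) ^ p := key
      _ = ∑ i ∈ S, W ^ (p-1) * (μ i * b i ^ p) := Finset.sum_congr rfl e2
      _ = W ^ (p-1) * ∑ i ∈ S, μ i * b i ^ p := by rw [Finset.mul_sum]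

private lemma two_term_aux {p : ℝ} (hp : 1 < p) {a b : ℝ} (ha : 0 ≤ a) (hb : 0 ≤ b) :
    (a + b) ^ p ≤ 2 ^ (p - 1) * (a ^ p + b ^ p) := by
  have h := jensen_aux hp ({0, 1} : Finset ℕ) (fun _ => 1) (fun i => if i = 0 then a else b)
    (fun i _ => zero_le_one) (fun i _ => by split <;> assumption)
  simpa using h

private lemma scalar_aux {p : ℝ} (hp : 1 < p) {i n : ℕ} (hn : 1 ≤ n)
    (h2 : (2:ℝ)^i ≤ (n:ℝ)+1) :
    2 ^ (p-1) * (((n:ℝ))⁻¹) ^ p * ((((n:ℝ)+1) / (2:ℝ)^i)) ^ (p-1) ≤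
      2 ^ (2*p-1) * ((2:ℝ)^i) ^ (-p) := by
  have hN : (1:ℝ) ≤ (n:ℝ) := by exact_mod_cast hn
  have hN0 : (0:ℝ) < (n:ℝ) := by linarith
  have hQ : (0:ℝ) < (2:ℝ)^i := by positivity
  set N := (n:ℝ)
  set Q := (2:ℝ)^i with hQdef
  set t := (N+1)/Q with ht
  have ht0 : 0 < t := by positivity
  have ht1 : 1 ≤ t := (one_le_div hQ).mpr h2
  have e1 : t ^ (p-1) = t ^ p * t⁻¹ := by
    rw [Real.rpow_sub_one ht0.ne', div_eq_mul_inv]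
  have key : (N⁻¹) ^ p * t ^ p ≤ 2 ^ p * Q ^ (-p) := by
    have e2 : N⁻¹ * t = (N+1)/(N*Q) := by rw [ht]; field_simp
    have e3 : (N⁻¹) ^ p * t ^ p = ((N+1)/(N*Q)) ^ p := by
      rw [← Real.mul_rpow (by positivity) ht0.le, e2]
    have e4 : (N+1)/(N*Q) ≤ 2/Q := by
      rw [div_le_div_iff₀ (by positivity) hQ]
      nlinarith
    have e5 : ((N+1)/(N*Q)) ^ p ≤ (2/Q) ^ p :=
      Real.rpow_le_rpow (by positivity) e4 (by linarith)
    have e6 : ((2:ℝ)/Q) ^ p = 2 ^ p * Q ^ (-p) := by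
      rw [Real.div_rpow (by norm_num) hQ.le, Real.rpow_neg hQ.le, div_eq_mul_inv]
    rw [e3, ← e6]; exact e5
  have ht2 : t⁻¹ ≤ 1 := inv_le_one_of_one_le₀ ht1
  calc 2 ^ (p-1) * (N⁻¹) ^ p * t ^ (p-1) 
      = 2 ^ (p-1) * ((N⁻¹) ^ p * t ^ p) * t⁻¹ := by rw [e1]; ring
    _ ≤ 2 ^ (p-1) * (2 ^ p * Q ^ (-p)) * 1 := by
        apply mul_le_mul _ ht2 (by positivity) (by positivity)
        exact mul_le_mul_of_nonneg_left key (by positivity)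
    _ = 2 ^ (2*p-1) * Q ^ (-p) := by
        rw [mul_one, show (2:ℝ)^(p-1) * (2^p * Q^(-p)) = (2^(p-1) * 2^p) * Q^(-p) by ring,
          ← Real.rpow_add two_pos]
        ring_nf

private lemma main_aux (p : ℝ) (hp : 1 < p) (ω : ℕ → ℝ) (hω : ∀ n, 0 < ω n) (g : ℕ → ℂ)
    (C : ℝ) (hC0 : 0 ≤ C)
    (hC : WMatBound p ω (fun n k => if k ≤ n then g (n - k) else 0) C) :
    WMatBound p ω
      (fun n k =>
        if k < n then ((((n : ℝ) - (k : ℝ)) / (n : ℝ) : ℝ) : ℂ) * g (n - k) else 0)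
      (16 * C) := by
  have hp0 : (0:ℝ) < p := by linarith
  unfold WMatBound at hC ⊢
  set A : ℕ → ℕ → ℂ := fun n k => if k ≤ n then g (n - k) else 0 with hA
  set B : ℕ → ℕ → ℂ := fun n k =>
    if k < n then ((((n : ℝ) - (k : ℝ)) / (n : ℝ) : ℝ) : ℂ) * g (n - k) else 0 with hB
  -- basic bound on g 0
  have hg0 : ‖g 0‖ ^ p ≤ C ^ p := by
    have h1 := hC (Finsupp.single 0 1)
    have hrow : ∀ n, (∑ k ∈ (Finsupp.single (0:ℕ) (1:ℂ)).support, A n k *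
        (Finsupp.single (0:ℕ) (1:ℂ)) k) = g n := by
      intro n
      rw [Finsupp.support_single_ne_zero _ one_ne_zero]
      simp [hA]
    simp only [hrow] at h1
    have h2 : ‖g 0‖ ^ p * ω 0 ≤ ∑' n, ‖g n‖ ^ p * ω n :=
      Summable.le_tsum h1.1 0 (fun j _ => mul_nonneg (by positivity) (hω j).le)
    have h3 : (∑ k ∈ (Finsupp.single (0:ℕ) (1:ℂ)).support,
        ‖(Finsupp.single (0:ℕ) (1:ℂ)) k‖ ^ p * ω k) = ω 0 := by
      rw [Finsupp.support_single_ne_zero _ one_ne_zero]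
      simp
    rw [h3] at h1
    have h4 : ‖g 0‖ ^ p * ω 0 ≤ C ^ p * ω 0 := le_trans h2 h1.2
    exact le_of_mul_le_mul_right h4 (hω 0)
  intro x
  set L : ℕ := x.support.sup id + 1 with hL
  have hlvl_mem : ∀ k ∈ x.support, Nat.log 2 (k+1) ∈ Finset.range (L+1) := by
    intro k hk
    have h1 : k ≤ x.support.sup id := Finset.le_sup (f := id) hk
    have h2 : Nat.log 2 (k+1) ≤ k+1 := Nat.log_le_self _ _
    exact Finset.mem_range.mpr (by omega)
  set y : ℕ → (ℕ →₀ ℂ) := fun i => Finsupp.onFinset x.support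
    (fun k => if Nat.log 2 (k+1) = i then (k : ℂ) * x k else 0)
    (fun k hk => by
      by_contra hks
      have : x k = 0 := Finsupp.notMem_support_iff.mp hks
      simp [this] at hk) with hy
  have hyval : ∀ i k, (y i) k = if Nat.log 2 (k+1) = i then (k : ℂ) * x k else 0 :=
    fun i k => rfl
  have hysupp : ∀ i, (y i).support ⊆ x.support := fun i => Finsupp.support_onFinset_subset
  set R : ℕ → ℕ → ℂ := fun i n => ∑ k ∈ (y i).support, A n k * (y i) k with hR
  set G : ℕ → ℂ := fun n => ∑ k ∈ x.support, A n k * x k with hG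
  set F : ℕ → ℂ := fun n => ∑ k ∈ x.support, B n k * x k with hF
  set H : ℕ → ℂ := fun n => ∑ k ∈ x.support, (A n k - B n k) * x k with hH
  set Nx : ℝ := ∑ k ∈ x.support, ‖x k‖ ^ p * ω k with hNx
  have hNx0 : 0 ≤ Nx := Finset.sum_nonneg fun k _ => mul_nonneg (by positivity) (hω k).le
  have hGp := hC x
  have hRp : ∀ i, Summable (fun n => ‖R i n‖ ^ p * ω n) ∧
      ∑' n, ‖R i n‖ ^ p * ω n ≤ C ^ p * ∑ k ∈ (y i).support, ‖(y i) k‖ ^ p * ω k :=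
    fun i => hC (y i)
  -- extension of R to sums over x.support
  have hRext : ∀ i n, R i n = ∑ k ∈ x.support, A n k * (y i) k := by
    intro i n
    exact Finset.sum_subset (hysupp i)
      (fun k _ hnk => by rw [Finsupp.notMem_support_iff.mp hnk, mul_zero])
  -- entry identity
  have hABentry : ∀ n k, 1 ≤ n → A n k - B n k = (n:ℂ)⁻¹ * ((k:ℂ) * A n k) := by
    intro n k hn
    have hn0' : (n:ℂ) ≠ 0 := Nat.cast_ne_zero.mpr (by omega)
    by_cases hkn : k ≤ n
    · by_cases hkn' : k < n
      · simp only [hA, hB, if_pos hkn, if_pos hkn']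
        have hc : ((((n : ℝ) - (k : ℝ)) / (n : ℝ) : ℝ) : ℂ) = ((n:ℂ) - (k:ℂ))/(n:ℂ) := by
          push_cast; ring
        rw [hc]
        field_simp
        ring
      · have hk : k = n := le_antisymm hkn (not_lt.mp hkn')
        subst hk
        simp only [hA, hB, if_pos le_rfl, if_neg (lt_irrefl k)]
        field_simp
        simp
    · simp only [hA, hB, if_neg hkn, if_neg (fun h => hkn (le_of_lt h))]
      simp
  -- H at positive n
  have hHsum_eq : ∀ n, 1 ≤ n → H n = (n:ℂ)⁻¹ * ∑ i ∈ Finset.range (L+1), R i n := by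
    intro n hn
    have h2 : ∀ k ∈ x.support,
        (∑ i ∈ Finset.range (L+1), A n k * (y i) k) = A n k * ((k:ℂ) * x k) := by
      intro k hk
      have h3 : ∀ i, A n k * (y i) k =
          if Nat.log 2 (k+1) = i then A n k * ((k:ℂ) * x k) else 0 := by
        intro i; rw [hyval i k, mul_ite, mul_zero]
      rw [Finset.sum_congr rfl (fun i _ => h3 i), Finset.sum_ite_eq,
        if_pos (hlvl_mem k hk)]
    have h1 : ∑ i ∈ Finset.range (L+1), R i n
        = ∑ k ∈ x.support, A n k * ((k:ℂ) * x k) := by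
      calc ∑ i ∈ Finset.range (L+1), R i n
          = ∑ i ∈ Finset.range (L+1), ∑ k ∈ x.support, A n k * (y i) k :=
            Finset.sum_congr rfl (fun i _ => hRext i n)
        _ = ∑ k ∈ x.support, ∑ i ∈ Finset.range (L+1), A n k * (y i) k :=
            Finset.sum_comm
        _ = ∑ k ∈ x.support, A n k * ((k:ℂ) * x k) := Finset.sum_congr rfl h2
    rw [h1, Finset.mul_sum]
    simp only [hH]
    exact Finset.sum_congr rfl fun k _ => by rw [hABentry n k hn]; ring
  -- vanishing of R
  have hRvanish : ∀ i n, n + 1 < 2^i → R i n = 0 := by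
    intro i n hni
    simp only [hR]
    apply Finset.sum_eq_zero
    intro k hk
    have hk0 : (y i) k ≠ 0 := Finsupp.mem_support_iff.mp hk
    have hlk : Nat.log 2 (k+1) = i := by
      by_contra hne
      rw [hyval i k, if_neg hne] at hk0; exact hk0 rfl
    have h2 : 2^i ≤ k+1 := by rw [← hlk]; exact Nat.pow_log_le_self 2 (Nat.succ_ne_zero k)
    have h3 : ¬ (k ≤ n) := by omega
    simp only [hA, if_neg h3, zero_mul]
  -- H 0
  have hH0 : H 0 = g 0 * x 0 := by
    simp only [hH]
    have h1 : ∀ k ∈ x.support, (A 0 k - B 0 k) * x k = if k = 0 then g 0 * x k else 0 := by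
      intro k _
      simp only [hA, hB]
      rcases Nat.eq_zero_or_pos k with h | h
      · subst h; norm_num
      · rw [if_neg (by omega), if_neg (by omega)]
        rw [if_neg (by omega)]
        simp
    rw [Finset.sum_congr rfl h1, Finset.sum_ite_eq' x.support 0 (fun k => g 0 * x k)]
    by_cases h0 : 0 ∈ x.support
    · rw [if_pos h0]
    · rw [if_neg h0, Finsupp.notMem_support_iff.mp h0, mul_zero]
  -- the per-n bound
  have hHbound : ∀ n, ‖H n‖ ^ p * ω n ≤
      (if n = 0 then C ^ p * (‖x 0‖ ^ p * ω 0) else 0) +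
      2 ^ (2*p-1) * ∑ i ∈ Finset.range (L+1), ((2:ℝ)^i) ^ (-p) * (‖R i n‖ ^ p * ω n) := by
    intro n
    rcases Nat.eq_zero_or_pos n with hn0 | hn1
    · subst hn0
      rw [if_pos rfl]
      have h1 : ‖H 0‖ ^ p * ω 0 ≤ C ^ p * (‖x 0‖ ^ p * ω 0) := by
        rw [hH0, norm_mul, Real.mul_rpow (norm_nonneg _) (norm_nonneg _)]
        calc ‖g 0‖ ^ p * ‖x 0‖ ^ p * ω 0 ≤ C ^ p * ‖x 0‖ ^ p * ω 0 :=
              mul_le_mul_of_nonneg_right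
                (mul_le_mul_of_nonneg_right hg0 (by positivity)) (hω 0).le
          _ = C ^ p * (‖x 0‖ ^ p * ω 0) := by ring
      have h3 : 0 ≤ 2 ^ (2*p-1) *
          ∑ i ∈ Finset.range (L+1), ((2:ℝ)^i) ^ (-p) * (‖R i 0‖ ^ p * ω 0) := by
        apply mul_nonneg (by positivity)
        exact Finset.sum_nonneg fun i _ => mul_nonneg (by positivity)
          (mul_nonneg (by positivity) (hω 0).le)
      linarith
    · rw [if_neg (by omega), zero_add]
      have hn1' : 1 ≤ n := hn1
      have hnR : (1:ℝ) ≤ (n:ℝ) := by exact_mod_cast hn1'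
      have hn0R : (0:ℝ) < (n:ℝ) := by linarith
      set Sn := (Finset.range (L+1)).filter (fun i => 2^i ≤ n+1) with hSn
      have hHS : H n = (n:ℂ)⁻¹ * ∑ i ∈ Sn, R i n := by
        rw [hHsum_eq n hn1']
        congr 1
        refine (Finset.sum_filter_of_ne fun i _ hne => ?_).symm
        by_contra hlt
        exact hne (hRvanish i n (by omega))
      have hA1 : ‖H n‖ ≤ (n:ℝ)⁻¹ * ∑ i ∈ Sn, ‖R i n‖ := by
        rw [hHS, norm_mul, norm_inv, Complex.norm_natCast]
        exact mul_le_mul_of_nonneg_left (norm_sum_le _ _) (by positivity)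
      have hA2 : ‖H n‖ ^ p ≤ ((n:ℝ)⁻¹) ^ p * (∑ i ∈ Sn, ‖R i n‖) ^ p := by
        rw [← Real.mul_rpow (by positivity)
          (Finset.sum_nonneg fun i _ => norm_nonneg _)]
        exact Real.rpow_le_rpow (norm_nonneg _) hA1 hp0.le
      set μ : ℕ → ℝ := fun i => (2:ℝ)^i / ((n:ℝ)+1) with hμ
      set b : ℕ → ℝ := fun i => ‖R i n‖ * (((n:ℝ)+1) / (2:ℝ)^i) with hb
      have hμb : ∀ i ∈ Sn, μ i * b i = ‖R i n‖ := by
        intro i _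
        simp only [hμ, hb]
        field_simp
      have hJ : (∑ i ∈ Sn, ‖R i n‖) ^ p ≤
          (∑ i ∈ Sn, μ i) ^ (p-1) * ∑ i ∈ Sn, μ i * b i ^ p := by
        rw [← Finset.sum_congr rfl hμb]
        exact jensen_aux hp Sn μ b (fun i _ => by positivity)
          (fun i _ => mul_nonneg (norm_nonneg _) (by positivity))
      have hμsum : ∑ i ∈ Sn, μ i ≤ 2 := by
        set m := Nat.log 2 (n+1) with hm
        have hmem : ∀ i ∈ Sn, i ∈ Finset.range (m+1) := by
          intro i hi
          have h2 : 2^i ≤ n+1 := (Finset.mem_filter.mp hi).2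
          have h3 := (Nat.le_log_iff_pow_le (by norm_num) (by omega : n+1 ≠ 0)).mpr h2
          exact Finset.mem_range.mpr (by omega)
        have h1 : ∑ i ∈ Sn, μ i ≤ ∑ i ∈ Finset.range (m+1), μ i :=
          Finset.sum_le_sum_of_subset_of_nonneg hmem (fun i _ _ => by positivity)
        have h3 : ∑ i ∈ Finset.range (m+1), (2:ℝ)^i = 2^(m+1) - 1 := by
          have hg := geom_sum_eq (by norm_num : (2:ℝ) ≠ 1) (m+1)
          rw [hg]; norm_num
        have h4 : (2:ℝ)^m ≤ (n:ℝ)+1 := by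
          have h5 := Nat.pow_log_le_self 2 (by omega : n+1 ≠ 0)
          rw [← hm] at h5
          exact_mod_cast h5
        have h2 : ∑ i ∈ Finset.range (m+1), μ i ≤ 2 := by
          simp only [hμ]
          rw [← Finset.sum_div, h3, div_le_iff₀ (by positivity : (0:ℝ) < (n:ℝ)+1)]
          rw [pow_succ]
          nlinarith
        linarith
      have hμsum0 : 0 ≤ ∑ i ∈ Sn, μ i :=
        Finset.sum_nonneg fun i _ => by positivity
      have hJ2 : (∑ i ∈ Sn, μ i) ^ (p-1) ≤ 2 ^ (p-1) :=
        Real.rpow_le_rpow hμsum0 hμsum (by linarith)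
      have hterm : ∀ i ∈ Sn, ((n:ℝ)⁻¹) ^ p * (2 ^ (p-1) * (μ i * b i ^ p)) ≤
          2 ^ (2*p-1) * (((2:ℝ)^i) ^ (-p) * ‖R i n‖ ^ p) := by
        intro i hi
        have h2n : (2:ℝ)^i ≤ (n:ℝ)+1 := by
          have h2 : 2^i ≤ n+1 := (Finset.mem_filter.mp hi).2
          exact_mod_cast h2
        have ht0 : (0:ℝ) < ((n:ℝ)+1)/(2:ℝ)^i := by positivity
        have e1 : (((n:ℝ)+1)/(2:ℝ)^i)⁻¹ * (((n:ℝ)+1)/(2:ℝ)^i) ^ p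
            = (((n:ℝ)+1)/(2:ℝ)^i) ^ (p-1) := by
          rw [Real.rpow_sub_one ht0.ne', div_eq_mul_inv]
          ring
        have e2 : μ i = (((n:ℝ)+1)/(2:ℝ)^i)⁻¹ := by
          simp only [hμ]
          rw [inv_div]
        have e3 : b i ^ p = ‖R i n‖ ^ p * (((n:ℝ)+1)/(2:ℝ)^i) ^ p := by
          simp only [hb]
          rw [Real.mul_rpow (norm_nonneg _) ht0.le]
        have e4 : μ i * b i ^ p = ‖R i n‖ ^ p * (((n:ℝ)+1)/(2:ℝ)^i) ^ (p-1) := by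
          rw [e2, e3, ← e1]; ring
        have hsc := scalar_aux hp hn1' h2n
        calc ((n:ℝ)⁻¹) ^ p * (2 ^ (p-1) * (μ i * b i ^ p))
            = (2 ^ (p-1) * ((n:ℝ)⁻¹) ^ p * (((n:ℝ)+1)/(2:ℝ)^i) ^ (p-1)) *
                ‖R i n‖ ^ p := by rw [e4]; ring
          _ ≤ (2 ^ (2*p-1) * ((2:ℝ)^i) ^ (-p)) * ‖R i n‖ ^ p :=
              mul_le_mul_of_nonneg_right hsc (by positivity)
          _ = 2 ^ (2*p-1) * (((2:ℝ)^i) ^ (-p) * ‖R i n‖ ^ p) := by ring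
      have hchain : ‖H n‖ ^ p ≤
          ∑ i ∈ Sn, ((n:ℝ)⁻¹) ^ p * (2 ^ (p-1) * (μ i * b i ^ p)) := by
        have hsum0 : 0 ≤ ∑ i ∈ Sn, μ i * b i ^ p :=
          Finset.sum_nonneg fun i _ => mul_nonneg (by positivity)
            (Real.rpow_nonneg (mul_nonneg (norm_nonneg _) (by positivity)) p)
        calc ‖H n‖ ^ p ≤ ((n:ℝ)⁻¹) ^ p * (∑ i ∈ Sn, ‖R i n‖) ^ p := hA2
          _ ≤ ((n:ℝ)⁻¹) ^ p * ((∑ i ∈ Sn, μ i) ^ (p-1) * ∑ i ∈ Sn, μ i * b i ^ p) :=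
              mul_le_mul_of_nonneg_left hJ (by positivity)
          _ ≤ ((n:ℝ)⁻¹) ^ p * (2 ^ (p-1) * ∑ i ∈ Sn, μ i * b i ^ p) := by
              apply mul_le_mul_of_nonneg_left _ (by positivity)
              exact mul_le_mul_of_nonneg_right hJ2 hsum0
          _ = ∑ i ∈ Sn, ((n:ℝ)⁻¹) ^ p * (2 ^ (p-1) * (μ i * b i ^ p)) := by
              rw [Finset.mul_sum, Finset.mul_sum]
      calc ‖H n‖ ^ p * ω n
          ≤ (∑ i ∈ Sn, ((n:ℝ)⁻¹) ^ p * (2 ^ (p-1) * (μ i * b i ^ p))) * ω n :=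
            mul_le_mul_of_nonneg_right hchain (hω n).le
        _ ≤ (∑ i ∈ Sn, 2 ^ (2*p-1) * (((2:ℝ)^i) ^ (-p) * ‖R i n‖ ^ p)) * ω n :=
            mul_le_mul_of_nonneg_right (Finset.sum_le_sum hterm) (hω n).le
        _ = 2 ^ (2*p-1) * ∑ i ∈ Sn, ((2:ℝ)^i) ^ (-p) * (‖R i n‖ ^ p * ω n) := by
            rw [Finset.sum_mul, Finset.mul_sum]
            exact Finset.sum_congr rfl fun i _ => by ring
        _ ≤ 2 ^ (2*p-1) *
              ∑ i ∈ Finset.range (L+1), ((2:ℝ)^i) ^ (-p) * (‖R i n‖ ^ p * ω n) := by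
            apply mul_le_mul_of_nonneg_left _ (by positivity)
            apply Finset.sum_le_sum_of_subset_of_nonneg (Finset.filter_subset _ _)
            intro i _ _
            exact mul_nonneg (by positivity) (mul_nonneg (by positivity) (hω n).le)
  -- summability of the majorant
  have hsummandR : ∀ i, Summable (fun n => ((2:ℝ)^i) ^ (-p) * (‖R i n‖ ^ p * ω n)) :=
    fun i => ((hRp i).1).mul_left _
  have hPsi2 : Summable (fun n =>
      2 ^ (2*p-1) * ∑ i ∈ Finset.range (L+1), ((2:ℝ)^i) ^ (-p) * (‖R i n‖ ^ p * ω n)) :=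
    (summable_sum (fun i _ => hsummandR i)).mul_left _
  have hInd : Summable (fun n : ℕ => if n = 0 then C ^ p * (‖x 0‖ ^ p * ω 0) else 0) := by
    apply summable_of_ne_finset_zero (s := {0})
    intro b hb
    rw [if_neg]
    simpa using hb
  have hHNsum : Summable (fun n => ‖H n‖ ^ p * ω n) :=
    Summable.of_nonneg_of_le (fun n => mul_nonneg (by positivity) (hω n).le) hHbound (hInd.add hPsi2)
  -- block norms
  have hblock : ∀ i, ∑ k ∈ (y i).support, ‖(y i) k‖ ^ p * ω k ≤
      ((2:ℝ)^(i+1)) ^ p * ∑ k ∈ x.support.filter (fun k => Nat.log 2 (k+1) = i),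
        ‖x k‖ ^ p * ω k := by
    intro i
    have hsub : (y i).support ⊆ x.support.filter (fun k => Nat.log 2 (k+1) = i) := by
      intro k hk
      have hk0 : (y i) k ≠ 0 := Finsupp.mem_support_iff.mp hk
      have hlk : Nat.log 2 (k+1) = i := by
        by_contra hne
        rw [hyval i k, if_neg hne] at hk0; exact hk0 rfl
      exact Finset.mem_filter.mpr ⟨hysupp i hk, hlk⟩
    calc ∑ k ∈ (y i).support, ‖(y i) k‖ ^ p * ω k
        ≤ ∑ k ∈ (y i).support, ((2:ℝ)^(i+1)) ^ p * (‖x k‖ ^ p * ω k) := by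
          refine Finset.sum_le_sum fun k hk => ?_
          have hk0 : (y i) k ≠ 0 := Finsupp.mem_support_iff.mp hk
          have hlk : Nat.log 2 (k+1) = i := by
            by_contra hne
            rw [hyval i k, if_neg hne] at hk0; exact hk0 rfl
          have hval : (y i) k = (k:ℂ) * x k := by rw [hyval i k, if_pos hlk]
          have hnorm : ‖(y i) k‖ = (k:ℝ) * ‖x k‖ := by
            rw [hval, norm_mul, Complex.norm_natCast]
          have hkle : (k:ℝ) ≤ (2:ℝ)^(i+1) := by
            have h4 : k + 1 < 2^(Nat.log 2 (k+1) + 1) :=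
              Nat.lt_pow_succ_log_self (by norm_num) (k+1)
            rw [hlk] at h4
            exact_mod_cast (by omega : k ≤ 2^(i+1))
          have h2 : ‖(y i) k‖ ^ p ≤ ((2:ℝ)^(i+1)) ^ p * ‖x k‖ ^ p := by
            rw [hnorm, ← Real.mul_rpow (by positivity) (norm_nonneg _)]
            exact Real.rpow_le_rpow (by positivity)
              (mul_le_mul_of_nonneg_right hkle (norm_nonneg _)) hp0.le
          calc ‖(y i) k‖ ^ p * ω k ≤ (((2:ℝ)^(i+1)) ^ p * ‖x k‖ ^ p) * ω k :=
                mul_le_mul_of_nonneg_right h2 (hω k).le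
            _ = ((2:ℝ)^(i+1)) ^ p * (‖x k‖ ^ p * ω k) := by ring
      _ ≤ ∑ k ∈ x.support.filter (fun k => Nat.log 2 (k+1) = i),
            ((2:ℝ)^(i+1)) ^ p * (‖x k‖ ^ p * ω k) :=
          Finset.sum_le_sum_of_subset_of_nonneg hsub
            (fun k _ _ => mul_nonneg (by positivity)
              (mul_nonneg (by positivity) (hω k).le))
      _ = ((2:ℝ)^(i+1)) ^ p * ∑ k ∈ x.support.filter (fun k => Nat.log 2 (k+1) = i),
            ‖x k‖ ^ p * ω k := by rw [Finset.mul_sum]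
  have hsigma : ∑ i ∈ Finset.range (L+1),
      (∑ k ∈ x.support.filter (fun k => Nat.log 2 (k+1) = i), ‖x k‖ ^ p * ω k) = Nx := by
    have h1 : ∀ i, (∑ k ∈ x.support.filter (fun k => Nat.log 2 (k+1) = i),
        ‖x k‖ ^ p * ω k)
        = ∑ k ∈ x.support, if Nat.log 2 (k+1) = i then ‖x k‖ ^ p * ω k else 0 :=
      fun i => Finset.sum_filter _ _
    rw [Finset.sum_congr rfl (fun i _ => h1 i), Finset.sum_comm, hNx]
    refine Finset.sum_congr rfl fun k hk => ?_
    rw [Finset.sum_ite_eq, if_pos (hlvl_mem k hk)]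
  -- tsum bound for H
  have hHNbd : ∑' n, ‖H n‖ ^ p * ω n ≤ 2 ^ (3*p) * C ^ p * Nx := by
    have step1 : ∑' n, ‖H n‖ ^ p * ω n ≤
        C ^ p * (‖x 0‖ ^ p * ω 0) + 2 ^ (2*p-1) *
          ∑ i ∈ Finset.range (L+1), ((2:ℝ)^i) ^ (-p) * ∑' n, (‖R i n‖ ^ p * ω n) := by
      have t1 := Summable.tsum_le_tsum hHbound hHNsum (hInd.add hPsi2)
      rw [Summable.tsum_add hInd hPsi2, tsum_ite_eq, tsum_mul_left,
        Summable.tsum_finsetSum (fun i _ => hsummandR i)] at t1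
      simp only [tsum_mul_left] at t1
      exact t1
    have step2 : ∀ i ∈ Finset.range (L+1),
        ((2:ℝ)^i) ^ (-p) * ∑' n, (‖R i n‖ ^ p * ω n) ≤
        C ^ p * (2 ^ p * ∑ k ∈ x.support.filter (fun k => Nat.log 2 (k+1) = i),
          ‖x k‖ ^ p * ω k) := by
      intro i _
      have hcoef : ((2:ℝ)^i) ^ (-p) * ((2:ℝ)^(i+1)) ^ p = 2 ^ p := by
        have hsucc : ((2:ℝ)^(i+1)) ^ p = ((2:ℝ)^i) ^ p * 2 ^ p := by
          rw [pow_succ, Real.mul_rpow (by positivity) (by norm_num)]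
        rw [hsucc, ← mul_assoc, ← Real.rpow_add (by positivity : (0:ℝ) < (2:ℝ)^i)]
        norm_num
      have t2 : ∑' n, (‖R i n‖ ^ p * ω n) ≤
          C ^ p * (((2:ℝ)^(i+1)) ^ p * ∑ k ∈ x.support.filter
            (fun k => Nat.log 2 (k+1) = i), ‖x k‖ ^ p * ω k) :=
        le_trans (hRp i).2 (mul_le_mul_of_nonneg_left (hblock i) (Real.rpow_nonneg hC0 p))
      calc ((2:ℝ)^i) ^ (-p) * ∑' n, (‖R i n‖ ^ p * ω n)
          ≤ ((2:ℝ)^i) ^ (-p) * (C ^ p * (((2:ℝ)^(i+1)) ^ p *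
              ∑ k ∈ x.support.filter (fun k => Nat.log 2 (k+1) = i),
                ‖x k‖ ^ p * ω k)) :=
            mul_le_mul_of_nonneg_left t2 (Real.rpow_nonneg (by positivity) _)
        _ = C ^ p * ((((2:ℝ)^i) ^ (-p) * ((2:ℝ)^(i+1)) ^ p) *
              ∑ k ∈ x.support.filter (fun k => Nat.log 2 (k+1) = i),
                ‖x k‖ ^ p * ω k) := by ring
        _ = C ^ p * (2 ^ p * ∑ k ∈ x.support.filter (fun k => Nat.log 2 (k+1) = i),
              ‖x k‖ ^ p * ω k) := by rw [hcoef]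
    have hc0 : C ^ p * (‖x 0‖ ^ p * ω 0) ≤ C ^ p * Nx := by
      apply mul_le_mul_of_nonneg_left _ (Real.rpow_nonneg hC0 p)
      by_cases h0 : 0 ∈ x.support
      · exact Finset.single_le_sum (f := fun k => ‖x k‖ ^ p * ω k)
          (fun k _ => mul_nonneg (by positivity) (hω k).le) h0
      · rw [Finsupp.notMem_support_iff.mp h0]
        rw [norm_zero, Real.zero_rpow hp0.ne', zero_mul]
        exact hNx0
    have e1 : (2:ℝ) ^ (2*p-1) * 2 ^ p = 2 ^ (3*p-1) := by
      rw [← Real.rpow_add two_pos]; congr 1; ring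
    have e2 : (1:ℝ) ≤ 2 ^ (3*p-1) := Real.one_le_rpow one_le_two (by linarith)
    have e3 : (2:ℝ) ^ (3*p-1) * 2 = 2 ^ (3*p) := by
      rw [← Real.rpow_add_one (by norm_num : (2:ℝ) ≠ 0)]; congr 1; ring
    have hK0 : 0 ≤ C ^ p * Nx := mul_nonneg (Real.rpow_nonneg hC0 p) hNx0
    calc ∑' n, ‖H n‖ ^ p * ω n
        ≤ C ^ p * (‖x 0‖ ^ p * ω 0) + 2 ^ (2*p-1) *
            ∑ i ∈ Finset.range (L+1), ((2:ℝ)^i) ^ (-p) * ∑' n, (‖R i n‖ ^ p * ω n) :=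
          step1
      _ ≤ C ^ p * Nx + 2 ^ (2*p-1) *
            ∑ i ∈ Finset.range (L+1), C ^ p * (2 ^ p *
              ∑ k ∈ x.support.filter (fun k => Nat.log 2 (k+1) = i),
                ‖x k‖ ^ p * ω k) :=
          add_le_add hc0 (mul_le_mul_of_nonneg_left
            (Finset.sum_le_sum step2) (by positivity))
      _ = C ^ p * Nx + 2 ^ (2*p-1) * (C ^ p * (2 ^ p * Nx)) := by
          rw [← Finset.mul_sum, ← Finset.mul_sum, hsigma]
      _ = (1 + 2 ^ (2*p-1) * 2 ^ p) * (C ^ p * Nx) := by ring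
      _ = (1 + 2 ^ (3*p-1)) * (C ^ p * Nx) := by rw [e1]
      _ ≤ (2 ^ (3*p-1) + 2 ^ (3*p-1)) * (C ^ p * Nx) :=
          mul_le_mul_of_nonneg_right (by linarith) hK0
      _ = (2 ^ (3*p-1) * 2) * (C ^ p * Nx) := by ring
      _ = 2 ^ (3*p) * C ^ p * Nx := by rw [e3]; ring
  -- conclusion
  have hFGH : ∀ n, F n = G n - H n := by
    intro n
    rw [hG, hH, hF, ← Finset.sum_sub_distrib]
    exact Finset.sum_congr rfl fun k _ => by ring
  have hFbound : ∀ n, ‖F n‖ ^ p * ω n ≤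
      2 ^ (p-1) * (‖G n‖ ^ p * ω n + ‖H n‖ ^ p * ω n) := by
    intro n
    have h1 : ‖F n‖ ≤ ‖G n‖ + ‖H n‖ := by rw [hFGH n]; exact norm_sub_le _ _
    have h2 : ‖F n‖ ^ p ≤ (‖G n‖ + ‖H n‖) ^ p :=
      Real.rpow_le_rpow (norm_nonneg _) h1 hp0.le
    have h3 := two_term_aux hp (norm_nonneg (G n)) (norm_nonneg (H n))
    calc ‖F n‖ ^ p * ω n ≤ (2 ^ (p-1) * (‖G n‖ ^ p + ‖H n‖ ^ p)) * ω n :=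
          mul_le_mul_of_nonneg_right (le_trans h2 h3) (hω n).le
      _ = 2 ^ (p-1) * (‖G n‖ ^ p * ω n + ‖H n‖ ^ p * ω n) := by ring
  have hFNsum : Summable (fun n => ‖F n‖ ^ p * ω n) :=
    Summable.of_nonneg_of_le (fun n => mul_nonneg (by positivity) (hω n).le) hFbound
      ((hGp.1.add hHNsum).mul_left _)
  refine ⟨hFNsum, ?_⟩
  have h5 : ∑' n, ‖F n‖ ^ p * ω n ≤
      2 ^ (p-1) * (∑' n, ‖G n‖ ^ p * ω n + ∑' n, ‖H n‖ ^ p * ω n) := by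
    calc ∑' n, ‖F n‖ ^ p * ω n
        ≤ ∑' n, 2 ^ (p-1) * (‖G n‖ ^ p * ω n + ‖H n‖ ^ p * ω n) :=
          Summable.tsum_le_tsum hFbound hFNsum (((hGp.1).add hHNsum).mul_left _)
      _ = 2 ^ (p-1) * (∑' n, ‖G n‖ ^ p * ω n + ∑' n, ‖H n‖ ^ p * ω n) := by
          rw [tsum_mul_left, Summable.tsum_add hGp.1 hHNsum]
  have h6 : ∑' n, ‖G n‖ ^ p * ω n + ∑' n, ‖H n‖ ^ p * ω n ≤
      C ^ p * Nx + 2 ^ (3*p) * C ^ p * Nx := add_le_add hGp.2 hHNbd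
  have h7 : (2:ℝ) ^ (p-1) * (C ^ p * Nx + 2 ^ (3*p) * C ^ p * Nx) ≤ (16*C) ^ p * Nx := by
    have hK0 : 0 ≤ C ^ p * Nx := mul_nonneg (Real.rpow_nonneg hC0 p) hNx0
    have h16 : (16*C) ^ p = 2 ^ (4*p) * C ^ p := by
      rw [Real.mul_rpow (by norm_num) hC0]
      congr 1
      rw [show (16:ℝ) = 2 ^ (4:ℝ) by
          rw [show (4:ℝ) = ((4:ℕ):ℝ) by norm_num, Real.rpow_natCast]; norm_num,
        ← Real.rpow_mul (by norm_num)]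
    have e1 : (1:ℝ) ≤ 2 ^ (3*p) := Real.one_le_rpow one_le_two (by linarith)
    have e2 : (2:ℝ) ^ (p-1) * 2 = 2 ^ p := by
      rw [← Real.rpow_add_one (by norm_num : (2:ℝ) ≠ 0) (p-1)]
      congr 1; ring
    have e3 : (2:ℝ) ^ p * 2 ^ (3*p) = 2 ^ (4*p) := by
      rw [← Real.rpow_add two_pos]; congr 1; ring
    have h8 : (2:ℝ) ^ (p-1) * (1 + 2 ^ (3*p)) ≤ 2 ^ (4*p) := by
      calc (2:ℝ) ^ (p-1) * (1 + 2 ^ (3*p)) ≤ 2 ^ (p-1) * (2 ^ (3*p) + 2 ^ (3*p)) :=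
            mul_le_mul_of_nonneg_left (by linarith) (by positivity)
        _ = (2 ^ (p-1) * 2) * 2 ^ (3*p) := by ring
        _ = 2 ^ (4*p) := by rw [e2, e3]
    calc (2:ℝ) ^ (p-1) * (C ^ p * Nx + 2 ^ (3*p) * C ^ p * Nx)
        = (2 ^ (p-1) * (1 + 2 ^ (3*p))) * (C ^ p * Nx) := by ring
      _ ≤ 2 ^ (4*p) * (C ^ p * Nx) := mul_le_mul_of_nonneg_right h8 hK0
      _ = (16*C) ^ p * Nx := by rw [h16]; ring
  calc ∑' n, ‖F n‖ ^ p * ω n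
      ≤ 2 ^ (p-1) * (C ^ p * Nx + 2 ^ (3*p) * C ^ p * Nx) := by
        refine le_trans h5 (mul_le_mul_of_nonneg_left h6 (by positivity))
    _ ≤ (16*C) ^ p * Nx := h7

/-- If `g` (given by its Taylor coefficients) is a multiplier of `ℓ^p_A(ω)`, where `ω` is
a positive weight with `ω_n/ω_{n+1} → 1` and `1 < p < ∞`, then the generalized Volterra
operator `T_g`, whose matrix has entries `((n−k)/n)·ĝ(n−k)` for `0 ≤ k < n`, is bounded
on `ℓ^p_A(ω)`. -/
theorem multiplier_implies_volterra_bounded (p : ℝ) (hp : 1 < p)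
    (ω : ℕ → ℝ) (hω : ∀ n, 0 < ω n)
    (hratio : Filter.Tendsto (fun n => ω n / ω (n + 1)) Filter.atTop (nhds 1))
    (g : ℕ → ℂ)
    (hg : ∃ C : ℝ, 0 ≤ C ∧
      WMatBound p ω (fun n k => if k ≤ n then g (n - k) else 0) C) :
    ∃ C : ℝ, 0 ≤ C ∧
      WMatBound p ω
        (fun n k =>
          if k < n then ((((n : ℝ) - (k : ℝ)) / (n : ℝ) : ℝ) : ℂ) * g (n - k) else 0)
        C := by
  obtain ⟨C, hC0, hC⟩ := hg
  exact ⟨16 * C, by positivity, main_aux p hp ω hω g C hC0 hC⟩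
end
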